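/- arXiv:0908.3865 — 6 statements merged into one kernel-verified Lean document; each statement's English description precedes it below -/
import Mathlib

section
/- Let A be a difference integral domain. Then the following conditions are equivalent: (B1) for every n, every proper perfect difference ideal of A{y₁,…,yₙ} has a common zero in Aⁿ; (B2) for every n and every subset E ⊆ A{y₁,…,yₙ}, if E has a common zero in Bⁿ for some difference integral domain B containing A, then E has a common zero in Aⁿ; (B2') the same as (B2) with 'difference integral domain' replaced by 'difference field'. -/
open MvPolynomial

universe u v

variable {G : Type u} [Group G]

noncomputable def diffAct {A : Type v} [CommRing A] [MulSemiringAction G A] {n : ℕ} (σ : G) :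
    MvPolynomial (G × Fin n) A →+* MvPolynomial (G × Fin n) A :=
  (MvPolynomial.rename (Prod.map (fun τ => σ * τ) id)).toRingHom.comp
    (MvPolynomial.map (MulSemiringAction.toRingHom G A σ))

def IsDiffIdeal {A : Type v} [CommRing A] [MulSemiringAction G A] {n : ℕ}
    (I : Ideal (MvPolynomial (G × Fin n) A)) : Prop :=
  ∀ σ : G, ∀ f ∈ I, diffAct σ f ∈ I

def IsPerfectDiffIdeal {A : Type v} [CommRing A] [MulSemiringAction G A] {n : ℕ}
    (I : Ideal (MvPolynomial (G × Fin n) A)) : Prop :=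
  IsDiffIdeal I ∧
    ∀ (f : MvPolynomial (G × Fin n) A) (m : ℕ) (σ : Fin m → G) (k : Fin m → ℕ),
      (∀ i, 1 ≤ k i) → (∏ i, (diffAct (σ i) f) ^ k i) ∈ I → f ∈ I

def IsStableIdeal (G : Type u) [Group G] {R : Type v} [CommRing R] [MulSemiringAction G R] (I : Ideal R) : Prop :=
  ∀ σ : G, ∀ a ∈ I, σ • a ∈ I

def IsPerfectIdeal (G : Type u) [Group G] {R : Type v} [CommRing R] [MulSemiringAction G R] (I : Ideal R) : Prop :=
  IsStableIdeal G I ∧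
    ∀ (a : R) (m : ℕ) (σ : Fin m → G) (k : Fin m → ℕ),
      (∀ i, 1 ≤ k i) → (∏ i, (σ i • a) ^ k i) ∈ I → a ∈ I

def IsSimpleDiffRing (G : Type u) (R : Type v) [Group G] [CommRing R] [MulSemiringAction G R] : Prop :=
  Nontrivial R ∧ ∀ I : Ideal R, IsStableIdeal G I → I = ⊥ ∨ I = ⊤

def IsPseudofield (G : Type u) (R : Type v) [Group G] [CommRing R] [MulSemiringAction G R] : Prop :=
  IsSimpleDiffRing G R ∧ ∀ a : R, ∃ x : R, a * x * a = a

structure DiffRingExt (G : Type u) [Group G] : Type (max u (v + 1)) where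
  carrier : Type v
  [ring : CommRing carrier]
  [act : MulSemiringAction G carrier]

attribute [instance] DiffRingExt.ring DiffRingExt.act

structure DiffDomainExt (G : Type u) [Group G] : Type (max u (v + 1)) where
  carrier : Type v
  [ring : CommRing carrier]
  [dom : IsDomain carrier]
  [act : MulSemiringAction G carrier]

attribute [instance] DiffDomainExt.ring DiffDomainExt.dom DiffDomainExt.act

structure DiffFieldExt (G : Type u) [Group G] : Type (max u (v + 1)) where
  carrier : Type v
  [field : Field carrier]
  [act : MulSemiringAction G carrier]

attribute [instance] DiffFieldExt.field DiffFieldExt.act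
section Aux

variable {A : Type v} [CommRing A] [MulSemiringAction G A] {n : ℕ}

lemma diffAct_C (σ : G) (a : A) : diffAct (n := n) σ (C a) = C (σ • a) := by
  simp [diffAct, MulSemiringAction.toRingHom]
  rfl

lemma diffAct_X (σ : G) (p : G × Fin n) :
    diffAct (A := A) σ (X p) = X (σ * p.1, p.2) := by
  simp [diffAct, Prod.map, MulSemiringAction.toRingHom]

lemma diffAct_one_eq : diffAct (A := A) (n := n) (1 : G) = RingHom.id _ := by
  apply MvPolynomial.ringHom_ext
  · intro a; simp [diffAct_C]
  · intro p; simp [diffAct_X]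

lemma diffAct_comp_eq (σ τ : G) :
    (diffAct (A := A) (n := n) σ).comp (diffAct τ) = diffAct (σ * τ) := by
  apply MvPolynomial.ringHom_ext
  · intro a; simp [diffAct_C, mul_smul]
  · intro p; simp [diffAct_X, mul_assoc]

lemma diffAct_diffAct (σ τ : G) (f : MvPolynomial (G × Fin n) A) :
    diffAct σ (diffAct τ f) = diffAct (σ * τ) f := 
by
  rw [← diffAct_comp_eq, RingHom.comp_apply]

lemma diffAct_one (f : MvPolynomial (G × Fin n) A) : diffAct (1 : G) f = f :=
by
  rw [diffAct_one_eq, RingHom.id_apply]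

lemma eval₂_diffAct {B : Type*} [CommRing B] [MulSemiringAction G B]
    (φ : A →+* B) (hφ : ∀ (σ : G) (a : A), φ (σ • a) = σ • φ a) (x : Fin n → B)
    (σ : G) (f : MvPolynomial (G × Fin n) A) :
    eval₂ φ (fun p : G × Fin n => p.1 • x p.2) (diffAct σ f)
      = σ • eval₂ φ (fun p : G × Fin n => p.1 • x p.2) f := by
  have h1 : diffAct (n := n) σ f
      = rename (Prod.map (fun τ => σ * τ) (id : Fin n → Fin n))
          (MvPolynomial.map (MulSemiringAction.toRingHom G A σ) f) := rfl
  rw [h1, eval₂_rename, eval₂_map]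
  have h2 : σ • eval₂ φ (fun p : G × Fin n => p.1 • x p.2) f
      = (MulSemiringAction.toRingHom G B σ) (eval₂ φ (fun p : G × Fin n => p.1 • x p.2) f) := rfl
  rw [h2, eval₂_comp_left]
  congr 1
  · ext a; simp [MulSemiringAction.toRingHom, hφ]; exact hφ σ a
  · funext p
    simp [Prod.map, MulSemiringAction.toRingHom, mul_smul]
    rfl

end Aux
section Aux2

variable {A : Type v} [CommRing A] [MulSemiringAction G A] {n : ℕ}

/-- `diffAct` as a ring automorphism. -/
noncomputable def diffActEquiv (σ : G) :
    MvPolynomial (G × Fin n) A ≃+* MvPolynomial (G × Fin n) A :=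
  RingEquiv.ofRingHom (diffAct σ) (diffAct σ⁻¹)
    (by ext f <;> simp [diffAct_diffAct, diffAct_one])
    (by ext f <;> simp [diffAct_diffAct, diffAct_one])

@[simp] lemma diffActEquiv_apply (σ : G) (f : MvPolynomial (G × Fin n) A) :
    diffActEquiv σ f = diffAct σ f := rfl

/-- The group homomorphism `G →* RingAut (A{y})`. -/
noncomputable def diffActHom :
    G →* RingAut (MvPolynomial (G × Fin n) A) where
  toFun := diffActEquiv
  map_one' := by
    refine RingEquiv.ext fun f => ?_
    exact diffAct_one f
  map_mul' σ τ := by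
    refine RingEquiv.ext fun f => ?_
    exact (diffAct_diffAct σ τ f).symm

lemma map_diffActEquiv_self {𝔭 : Ideal (MvPolynomial (G × Fin n) A)}
    (h𝔭 : IsDiffIdeal 𝔭) (σ : G) :
    𝔭.map ((diffActEquiv σ : MvPolynomial (G × Fin n) A ≃+* MvPolynomial (G × Fin n) A) :
      MvPolynomial (G × Fin n) A →+* MvPolynomial (G × Fin n) A) = 𝔭 := by
  apply le_antisymm
  · rw [Ideal.map_le_iff_le_comap]
    intro f hf
    exact h𝔭 σ f hf
  · intro f hf
    have : f = diffAct σ (diffAct σ⁻¹ f) := by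
      rw [diffAct_diffAct, mul_inv_cancel, diffAct_one]
    rw [this]
    exact Ideal.mem_map_of_mem _ (h𝔭 σ⁻¹ f hf)

end Aux2
section Aux3

variable {A : Type v} [CommRing A] [MulSemiringAction G A] {n : ℕ}

/-- The induced `G`-action on the quotient by a difference ideal, as a
homomorphism to ring automorphisms. -/
noncomputable def quotDiffHom (𝔭 : Ideal (MvPolynomial (G × Fin n) A))
    (h𝔭 : IsDiffIdeal 𝔭) :
    G →* RingAut (MvPolynomial (G × Fin n) A ⧸ 𝔭) where
  toFun σ := Ideal.quotientEquiv 𝔭 𝔭 (diffActEquiv σ) (map_diffActEquiv_self h𝔭 σ).symm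
  map_one' := by
    refine RingEquiv.ext fun q => ?_
    obtain ⟨r, rfl⟩ := Ideal.Quotient.mk_surjective q
    show Ideal.Quotient.mk 𝔭 (diffAct 1 r) = Ideal.Quotient.mk 𝔭 r
    rw [diffAct_one]
  map_mul' σ τ := by
    refine RingEquiv.ext fun q => ?_
    obtain ⟨r, rfl⟩ := Ideal.Quotient.mk_surjective q
    show Ideal.Quotient.mk 𝔭 (diffAct (σ * τ) r)
      = Ideal.Quotient.mk 𝔭 (diffAct σ (diffAct τ r))
    rw [diffAct_diffAct]

/-- The `G`-action on the quotient by a difference ideal. -/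
noncomputable def quotDiffAction (𝔭 : Ideal (MvPolynomial (G × Fin n) A))
    (h𝔭 : IsDiffIdeal 𝔭) :
    MulSemiringAction G (MvPolynomial (G × Fin n) A ⧸ 𝔭) :=
  MulSemiringAction.compHom _ (quotDiffHom 𝔭 h𝔭)

end Aux3

section Aux4

variable (G)

/-- The `G`-action on the fraction field of a difference domain, as a homomorphism
to ring automorphisms. -/
noncomputable def fracDiffHom (B : Type*) [CommRing B] [IsDomain B]
    [MulSemiringAction G B] : G →* RingAut (FractionRing B) where
  toFun σ := IsFractionRing.ringEquivOfRingEquiv (MulSemiringAction.toRingAut G B σ)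
  map_one' := by
    apply RingEquiv.toRingHom_injective
    apply IsLocalization.ringHom_ext (nonZeroDivisors B)
    ext b
    show IsFractionRing.ringEquivOfRingEquiv (MulSemiringAction.toRingAut G B 1)
        (algebraMap B (FractionRing B) b) = algebraMap B (FractionRing B) b
    rw [IsFractionRing.ringEquivOfRingEquiv_algebraMap]
    show algebraMap B (FractionRing B) ((1 : G) • b) = _
    rw [one_smul]
  map_mul' σ τ := by
    apply RingEquiv.toRingHom_injective
    apply IsLocalization.ringHom_ext (nonZeroDivisors B)
    ext b
    show IsFractionRing.ringEquivOfRingEquiv (MulSemiringAction.toRingAut G B (σ * τ))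
        (algebraMap B (FractionRing B) b)
      = IsFractionRing.ringEquivOfRingEquiv (MulSemiringAction.toRingAut G B σ)
          (IsFractionRing.ringEquivOfRingEquiv (MulSemiringAction.toRingAut G B τ)
            (algebraMap B (FractionRing B) b))
    rw [IsFractionRing.ringEquivOfRingEquiv_algebraMap,
      IsFractionRing.ringEquivOfRingEquiv_algebraMap,
      IsFractionRing.ringEquivOfRingEquiv_algebraMap]
    show algebraMap B (FractionRing B) ((σ * τ) • b)
      = algebraMap B (FractionRing B) (σ • τ • b)
    rw [mul_smul]

/-- The `G`-action on the fraction field of a difference domain. -/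
noncomputable def fracDiffAction (B : Type*) [CommRing B] [IsDomain B]
    [MulSemiringAction G B] : MulSemiringAction G (FractionRing B) :=
  MulSemiringAction.compHom _ (fracDiffHom G B)

lemma fracDiffAction_smul_algebraMap (B : Type*) [CommRing B] [IsDomain B]
    [MulSemiringAction G B] (σ : G) (b : B) :
    letI := fracDiffAction G B
    σ • (algebraMap B (FractionRing B) b) = algebraMap B (FractionRing B) (σ • b) := by
  show IsFractionRing.ringEquivOfRingEquiv (MulSemiringAction.toRingAut G B σ)
      (algebraMap B (FractionRing B) b) = _
  rw [IsFractionRing.ringEquivOfRingEquiv_algebraMap]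
  rfl

end Aux4
section Main

variable (G)
variable (A : Type u) [CommRing A] [IsDomain A] [MulSemiringAction G A]

/-- Condition (B1). -/
def B1Prop : Prop :=
  ∀ (n : ℕ) (𝔞 : Ideal (MvPolynomial (G × Fin n) A)), IsPerfectDiffIdeal 𝔞 → 𝔞 ≠ ⊤ →
    ∃ x : Fin n → A, ∀ f ∈ 𝔞, aeval (fun p : G × Fin n => p.1 • x p.2) f = 0

/-- Condition (B2). -/
def B2Prop : Prop :=
  ∀ (n : ℕ) (E : Set (MvPolynomial (G × Fin n) A)),
    (∃ (B : DiffDomainExt.{u, u} G) (φ : A →+* B.carrier),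
        Function.Injective φ ∧ (∀ (σ : G) (a : A), φ (σ • a) = σ • φ a) ∧
        ∃ x : Fin n → B.carrier,
          ∀ f ∈ E, MvPolynomial.eval₂ φ (fun p : G × Fin n => p.1 • x p.2) f = 0) →
    ∃ x : Fin n → A, ∀ f ∈ E, aeval (fun p : G × Fin n => p.1 • x p.2) f = 0

/-- Condition (B2'). -/
def B2'Prop : Prop :=
  ∀ (n : ℕ) (E : Set (MvPolynomial (G × Fin n) A)),
    (∃ (B : DiffFieldExt.{u, u} G) (φ : A →+* B.carrier),
        Function.Injective φ ∧ (∀ (σ : G) (a : A), φ (σ • a) = σ • φ a) ∧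
        ∃ x : Fin n → B.carrier,
          ∀ f ∈ E, MvPolynomial.eval₂ φ (fun p : G × Fin n => p.1 • x p.2) f = 0) →
    ∃ x : Fin n → A, ∀ f ∈ E, aeval (fun p : G × Fin n => p.1 • x p.2) f = 0

end Main
section Implications
set_option linter.unusedSectionVars false

variable {A : Type u} [CommRing A] [IsDomain A] [MulSemiringAction G A]

lemma b2_of_b2' (h : B2'Prop G A) : B2Prop G A := by
  intro n E ⟨B, φ, hinj, hequiv, x, hx⟩
  letI act := fracDiffAction G B.carrier
  refine h n E ⟨⟨FractionRing B.carrier⟩,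
    (algebraMap B.carrier (FractionRing B.carrier)).comp φ,
    (IsFractionRing.injective B.carrier (FractionRing B.carrier)).comp hinj, ?_,
    fun i => algebraMap B.carrier (FractionRing B.carrier) (x i), ?_⟩
  · intro σ a
    show algebraMap B.carrier (FractionRing B.carrier) (φ (σ • a)) = _
    rw [hequiv]
    exact (fracDiffAction_smul_algebraMap G B.carrier σ (φ a)).symm
  · intro f hf
    have hv : (fun p : G × Fin n =>
          p.1 • algebraMap B.carrier (FractionRing B.carrier) (x p.2))
        = ⇑(algebraMap B.carrier (FractionRing B.carrier)) ∘
            fun p : G × Fin n => p.1 • x p.2 := by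
      funext p
      exact fracDiffAction_smul_algebraMap G B.carrier p.1 (x p.2)
    rw [hv, ← eval₂_comp_left, hx f hf, map_zero]

lemma b2'_of_b2 (h : B2Prop G A) : B2'Prop G A := by
  intro n E ⟨B, φ, hinj, hequiv, x, hx⟩
  exact h n E ⟨⟨B.carrier⟩, φ, hinj, hequiv, x, hx⟩


lemma b2_of_b1 (h : B1Prop G A) : B2Prop G A := by
  intro n E ⟨B, φ, hinj, hequiv, x, hx⟩
  set v : G × Fin n → B.carrier := fun p => p.1 • x p.2 with hv
  set K : Ideal (MvPolynomial (G × Fin n) A) := RingHom.ker (eval₂Hom φ v) with hK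
  have hmem : ∀ f, f ∈ K ↔ eval₂ φ v f = 0 := fun f => Iff.rfl
  have hdiff : IsDiffIdeal K := by
    intro σ f hf
    rw [hmem] at hf ⊢
    rw [eval₂_diffAct φ hequiv x σ f, hf, smul_zero]
  have hperf : IsPerfectDiffIdeal K := by
    refine ⟨hdiff, fun f m σ k hk hprod => ?_⟩
    rw [hmem] at hprod ⊢
    have : eval₂ φ v (∏ i, (diffAct (σ i) f) ^ k i)
        = ∏ i, (σ i • eval₂ φ v f) ^ k i := by
      show (eval₂Hom φ v) (∏ i, (diffAct (σ i) f) ^ k i) = _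
      rw [map_prod]
      refine Finset.prod_congr rfl fun i _ => ?_
      rw [map_pow]
      congr 1
      exact eval₂_diffAct φ hequiv x (σ i) f
    rw [hprod] at this
    by_contra hne
    have hfac : ∀ i : Fin m, (σ i • eval₂ φ v f) ^ k i ≠ 0 := by
      intro i
      apply pow_ne_zero
      intro h0
      apply hne
      have := congrArg (fun b => (σ i)⁻¹ • b) h0
      simpa [inv_smul_smul, smul_zero] using this
    exact Finset.prod_ne_zero_iff.mpr (fun i _ => hfac i) this.symm
  have hKne : K ≠ ⊤ := by
    intro ht
    have h1 : (1 : MvPolynomial (G × Fin n) A) ∈ K := ht ▸ Submodule.mem_top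
    rw [hmem, eval₂_one] at h1
    exact one_ne_zero h1
  obtain ⟨y, hy⟩ := h n K hperf hKne
  exact ⟨y, fun f hf => hy f ((hmem f).mpr (hx f hf))⟩
lemma isUnit_of_b2 (h : B2Prop G A) (a : A) (ha : a ≠ 0) : IsUnit a := by
  classical
  letI act := fracDiffAction G A
  set K := FractionRing A
  set φ := algebraMap A K with hφ
  have hφa : φ a ≠ 0 := by
    intro h0
    exact ha (IsFractionRing.injective A K (by rw [h0, map_zero]))
  have hwit : ∃ (B : DiffDomainExt.{u, u} G) (ψ : A →+* B.carrier),
      Function.Injective ψ ∧ (∀ (σ : G) (b : A), ψ (σ • b) = σ • ψ b) ∧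
      ∃ x : Fin 1 → B.carrier,
        ∀ f ∈ ({C a * X ((1 : G), (0 : Fin 1)) - 1} :
            Set (MvPolynomial (G × Fin 1) A)),
          MvPolynomial.eval₂ ψ (fun p : G × Fin 1 => p.1 • x p.2) f = 0 := by
    refine ⟨⟨K⟩, φ, IsFractionRing.injective A K, fun σ b =>
        (fracDiffAction_smul_algebraMap G A σ b).symm,
      fun _ => (φ a)⁻¹, ?_⟩
    intro f hf
    rw [Set.mem_singleton_iff] at hf
    subst hf
    rw [eval₂_sub, eval₂_mul, eval₂_C, eval₂_X, eval₂_one]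
    show φ a * ((1 : G) • (φ a)⁻¹) - 1 = 0
    rw [one_smul, mul_inv_cancel₀ hφa, sub_self]
  obtain ⟨y, hy⟩ := h 1 _ hwit
  have := hy (C a * X ((1 : G), (0 : Fin 1)) - 1) rfl
  rw [map_sub, map_mul, aeval_C, aeval_X, map_one] at this
  exact IsUnit.of_mul_eq_one (a := a) _ (sub_eq_zero.mp this)
/-- Well-mixed ideals in the difference polynomial ring. -/
def WellMixed {n : ℕ} (I : Ideal (MvPolynomial (G × Fin n) A)) : Prop :=
  ∀ f g : MvPolynomial (G × Fin n) A, ∀ σ : G, f * g ∈ I → f * diffAct σ g ∈ I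

lemma wellMixed_of_perfect {n : ℕ} {𝔞 : Ideal (MvPolynomial (G × Fin n) A)}
    (h𝔞 : IsPerfectDiffIdeal 𝔞) : WellMixed 𝔞 := by
  intro f g σ hfg
  apply h𝔞.2 (f * diffAct σ g) 2 ![1, σ⁻¹] ![1, 1] (by intro i; fin_cases i <;> norm_num)
  have hp : (∏ i : Fin 2,
        (diffAct ((![1, σ⁻¹] : Fin 2 → G) i) (f * diffAct σ g)) ^ (![1, 1] : Fin 2 → ℕ) i)
      = (f * g) * (diffAct σ g * diffAct σ⁻¹ f) := by
    rw [Fin.prod_univ_two]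
    simp only [Matrix.cons_val_zero, Matrix.cons_val_one, Matrix.head_cons, pow_one]
    rw [diffAct_one, map_mul, diffAct_diffAct, inv_mul_cancel, diffAct_one]
    ring
  rw [hp]
  exact Ideal.mul_mem_right _ _ hfg

lemma exists_max_wm {n : ℕ} {𝔞 : Ideal (MvPolynomial (G × Fin n) A)}
    (h𝔞 : IsPerfectDiffIdeal 𝔞) (hne : 𝔞 ≠ ⊤) :
    ∃ 𝔭 : Ideal (MvPolynomial (G × Fin n) A), 𝔞 ≤ 𝔭 ∧
      (𝔭 ≠ ⊤ ∧ IsDiffIdeal 𝔭 ∧ WellMixed 𝔭) ∧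
      (∀ I : Ideal (MvPolynomial (G × Fin n) A),
        (𝔞 ≤ I ∧ I ≠ ⊤ ∧ IsDiffIdeal I ∧ WellMixed I) → 𝔭 ≤ I → I = 𝔭) := by
  set S : Set (Ideal (MvPolynomial (G × Fin n) A)) :=
    {I | 𝔞 ≤ I ∧ I ≠ ⊤ ∧ IsDiffIdeal I ∧ WellMixed I} with hS
  have hzorn := zorn_le_nonempty₀ S ?_ 𝔞 ⟨le_refl _, hne, h𝔞.1, wellMixed_of_perfect h𝔞⟩
  · obtain ⟨𝔭, h𝔞𝔭, hmax⟩ := hzorn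
    exact ⟨𝔭, h𝔞𝔭, ⟨hmax.1.2.1, hmax.1.2.2⟩,
      fun I hI hle => le_antisymm (hmax.2 hI hle) hle⟩
  · intro c hcS hchain y hyc
    have hmem : ∀ z, z ∈ sSup c ↔ ∃ I ∈ c, z ∈ I := fun z =>
      Submodule.mem_sSup_of_directed ⟨y, hyc⟩ hchain.directedOn
    refine ⟨sSup c, ⟨?_, ?_, ?_, ?_⟩, fun z hz => le_sSup hz⟩
    · exact le_trans (hcS hyc).1 (le_sSup hyc)
    · intro ht
      obtain ⟨I, hIc, h1⟩ := (hmem 1).mp (ht ▸ Submodule.mem_top)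
      exact (hcS hIc).2.1 ((Ideal.eq_top_iff_one I).mpr h1)
    · intro σ f hf
      obtain ⟨I, hIc, hfI⟩ := (hmem f).mp hf
      exact (hmem _).mpr ⟨I, hIc, (hcS hIc).2.2.1 σ f hfI⟩
    · intro f g σ hfg
      obtain ⟨I, hIc, hfI⟩ := (hmem _).mp hfg
      exact (hmem _).mpr ⟨I, hIc, (hcS hIc).2.2.2 f g σ hfI⟩
lemma max_wm_isPrime {n : ℕ} {𝔞 𝔭 : Ideal (MvPolynomial (G × Fin n) A)}
    (h𝔞𝔭 : 𝔞 ≤ 𝔭) (hp : 𝔭 ≠ ⊤ ∧ IsDiffIdeal 𝔭 ∧ WellMixed 𝔭)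
    (hmax : ∀ I : Ideal (MvPolynomial (G × Fin n) A),
      (𝔞 ≤ I ∧ I ≠ ⊤ ∧ IsDiffIdeal I ∧ WellMixed I) → 𝔭 ≤ I → I = 𝔭) :
    𝔭.IsPrime := by
  obtain ⟨hpt, hpd, hpw⟩ := hp
  refine ⟨hpt, ?_⟩
  intro x y hxy
  by_contra hcon
  push_neg at hcon
  obtain ⟨hx, hy⟩ := hcon
  set K : Ideal (MvPolynomial (G × Fin n) A) :=
    { carrier := {z | x * z ∈ 𝔭}
      add_mem' := fun {a b} ha hb => by
        show x * (a + b) ∈ 𝔭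
        rw [mul_add]
        exact Ideal.add_mem _ ha hb
      zero_mem' := by
        show x * 0 ∈ 𝔭
        rw [mul_zero]
        exact 𝔭.zero_mem
      smul_mem' := fun c z hz => by
        show x * (c • z) ∈ 𝔭
        have : x * (c • z) = c * (x * z) := by
          rw [smul_eq_mul]; ring
        rw [this]
        exact Ideal.mul_mem_left _ _ hz } with hKdef
  have hKmem : ∀ z, z ∈ K ↔ x * z ∈ 𝔭 := fun z => Iff.rfl
  set T : Set (Ideal (MvPolynomial (G × Fin n) A)) :=
    {I | 𝔭 ≤ I ∧ y ∈ I ∧ IsDiffIdeal I ∧ WellMixed I} with hT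
  set J := sInf T with hJ
  have hJd : IsDiffIdeal J := fun σ f hf =>
    Submodule.mem_sInf.mpr fun I hI => hI.2.2.1 σ f (Submodule.mem_sInf.mp hf I hI)
  have hJw : WellMixed J := fun f g σ hfg =>
    Submodule.mem_sInf.mpr fun I hI => hI.2.2.2 f g σ (Submodule.mem_sInf.mp hfg I hI)
  have hpJ : 𝔭 ≤ J := le_sInf fun I hI => hI.1
  have hyJ : y ∈ J := Submodule.mem_sInf.mpr fun I hI => hI.2.1
  have hJtop : J = ⊤ := by
    by_contra hJt
    have := hmax J ⟨le_trans h𝔞𝔭 hpJ, hJt, hJd, hJw⟩ hpJ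
    exact hy (this ▸ hyJ)
  have hKT : K ∈ T := by
    refine ⟨fun z hz => Ideal.mul_mem_left _ _ hz, hxy,
      fun σ z hz => hpw x z σ hz, ?_⟩
    intro a b σ hab
    have hab' : (x * a) * b ∈ 𝔭 := by
      have : (x * a) * b = x * (a * b) := by ring
      rw [this]
      exact hab
    have := hpw (x * a) b σ hab'
    show x * (a * diffAct σ b) ∈ 𝔭
    have heq : x * (a * diffAct σ b) = (x * a) * diffAct σ b := by ring
    rw [heq]
    exact this
  have hJK : J ≤ K := sInf_le hKT
  have h1K : (1 : MvPolynomial (G × Fin n) A) ∈ K := hJK (hJtop ▸ Submodule.mem_top)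
  exact hx (by simpa using (hKmem 1).mp h1K)

set_option synthInstance.maxHeartbeats 1000000 in
set_option maxHeartbeats 1000000 in
lemma b1_of_b2 (h : B2Prop G A) : B1Prop G A := by
  intro n 𝔞 h𝔞 hne
  obtain ⟨𝔭, h𝔞𝔭, hp, hmax⟩ := exists_max_wm h𝔞 hne
  haveI hprime : 𝔭.IsPrime := max_wm_isPrime h𝔞𝔭 hp hmax
  obtain ⟨hpt, hpd, hpw⟩ := hp
  letI act : MulSemiringAction G (MvPolynomial (G × Fin n) A ⧸ 𝔭) := quotDiffAction 𝔭 hpd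
  set φ : A →+* MvPolynomial (G × Fin n) A ⧸ 𝔭 :=
    (Ideal.Quotient.mk 𝔭).comp (C : A →+* MvPolynomial (G × Fin n) A) with hφ
  have hinj : Function.Injective φ := by
    intro a b hab
    by_contra hab'
    have hsub : (C (a - b) : MvPolynomial (G × Fin n) A) ∈ 𝔭 := by
      rw [map_sub]
      exact Ideal.Quotient.eq.mp hab
    have hu : IsUnit (C (a - b) : MvPolynomial (G × Fin n) A) :=
      (isUnit_of_b2 h (a - b) (sub_ne_zero.mpr hab')).map C
    exact hpt (Ideal.eq_top_of_isUnit_mem 𝔭 hsub hu)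
  have hequiv : ∀ (σ : G) (a : A), φ (σ • a) = σ • φ a := by
    intro σ a
    show Ideal.Quotient.mk 𝔭 (C (σ • a)) = Ideal.Quotient.mk 𝔭 (diffAct σ (C a))
    rw [diffAct_C]
  set x : Fin n → MvPolynomial (G × Fin n) A ⧸ 𝔭 :=
    fun i => Ideal.Quotient.mk 𝔭 (X ((1 : G), i)) with hx
  have heval : ∀ f : MvPolynomial (G × Fin n) A,
      eval₂ φ (fun p : G × Fin n => p.1 • x p.2) f = Ideal.Quotient.mk 𝔭 f := by
    intro f
    have hv : (fun p : G × Fin n => p.1 • x p.2)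
        = ⇑(Ideal.Quotient.mk 𝔭) ∘ (X : G × Fin n → MvPolynomial (G × Fin n) A) := by
      funext p
      show Ideal.Quotient.mk 𝔭 (diffAct p.1 (X ((1 : G), p.2))) = Ideal.Quotient.mk 𝔭 (X p)
      rw [diffAct_X, mul_one]
    rw [hv, hφ, ← eval₂_comp_left, eval₂_eta]
  have hwit : ∃ (B : DiffDomainExt.{u, u} G) (ψ : A →+* B.carrier),
      Function.Injective ψ ∧ (∀ (σ : G) (b : A), ψ (σ • b) = σ • ψ b) ∧
      ∃ z : Fin n → B.carrier,
        ∀ f ∈ (↑𝔞 : Set (MvPolynomial (G × Fin n) A)),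
          MvPolynomial.eval₂ ψ (fun p : G × Fin n => p.1 • z p.2) f = 0 := by
    refine ⟨⟨MvPolynomial (G × Fin n) A ⧸ 𝔭⟩, φ, hinj, hequiv, x, ?_⟩
    intro f hf
    rw [heval f]
    exact Ideal.Quotient.eq_zero_iff_mem.mpr (h𝔞𝔭 hf)
  obtain ⟨z, hz⟩ := h n ↑𝔞 hwit
  exact ⟨z, fun f hf => hz f hf⟩
end Implications

/-- For a difference integral domain `A` the conditions (B1), (B2) and (B2') are
equivalent. -/
theorem stmt3 {G A : Type u} [Group G] [CommRing A] [IsDomain A] [MulSemiringAction G A] :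
    -- (B1)
    ((∀ (n : ℕ) (𝔞 : Ideal (MvPolynomial (G × Fin n) A)), IsPerfectDiffIdeal 𝔞 → 𝔞 ≠ ⊤ →
        ∃ x : Fin n → A, ∀ f ∈ 𝔞, aeval (fun p : G × Fin n => p.1 • x p.2) f = 0)
      ↔
    -- (B2)
      (∀ (n : ℕ) (E : Set (MvPolynomial (G × Fin n) A)),
        (∃ (B : DiffDomainExt.{u, u} G) (φ : A →+* B.carrier),
            Function.Injective φ ∧ (∀ (σ : G) (a : A), φ (σ • a) = σ • φ a) ∧
            ∃ x : Fin n → B.carrier,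
              ∀ f ∈ E, MvPolynomial.eval₂ φ (fun p : G × Fin n => p.1 • x p.2) f = 0) →
        ∃ x : Fin n → A, ∀ f ∈ E, aeval (fun p : G × Fin n => p.1 • x p.2) f = 0))
    ∧
    -- (B2) ↔ (B2')
    ((∀ (n : ℕ) (E : Set (MvPolynomial (G × Fin n) A)),
        (∃ (B : DiffDomainExt.{u, u} G) (φ : A →+* B.carrier),
            Function.Injective φ ∧ (∀ (σ : G) (a : A), φ (σ • a) = σ • φ a) ∧
            ∃ x : Fin n → B.carrier,
              ∀ f ∈ E, MvPolynomial.eval₂ φ (fun p : G × Fin n => p.1 • x p.2) f = 0) →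
        ∃ x : Fin n → A, ∀ f ∈ E, aeval (fun p : G × Fin n => p.1 • x p.2) f = 0)
      ↔
      (∀ (n : ℕ) (E : Set (MvPolynomial (G × Fin n) A)),
        (∃ (B : DiffFieldExt.{u, u} G) (φ : A →+* B.carrier),
            Function.Injective φ ∧ (∀ (σ : G) (a : A), φ (σ • a) = σ • φ a) ∧
            ∃ x : Fin n → B.carrier,
              ∀ f ∈ E, MvPolynomial.eval₂ φ (fun p : G × Fin n => p.1 • x p.2) f = 0) →
        ∃ x : Fin n → A, ∀ f ∈ E, aeval (fun p : G × Fin n => p.1 • x p.2) f = 0)) := by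
  exact ⟨⟨fun h1 => b2_of_b1 h1, fun h2 => b1_of_b2 h2⟩,
    ⟨fun h2 => b2'_of_b2 h2, fun h2' => b2_of_b2' h2'⟩⟩
end

section
/- In a difference ring, every maximal element of the set of proper perfect difference ideals is a prime ideal. -/
open MvPolynomial Pointwise

universe u v

variable {G : Type u} [Group G]

section Aux

open Pointwise

variable {R : Type v} [CommRing R] [MulSemiringAction G R]

/-- Shuffling lemma: in a perfect ideal, if `a * b ∈ P` then `(σ • a) * b ∈ P`. -/
lemma shuffle {P : Ideal R} (hP : IsPerfectIdeal G P) {a b : R} (h : a * b ∈ P) (σ : G) :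
    (σ • a) * b ∈ P := by
  have h2 : (σ • a) * (σ • b) ∈ P := by
    have := hP.1 σ _ h
    rwa [smul_mul'] at this
  apply hP.2 ((σ • a) * b) 2 ![1, σ] ![1, 1]
  · intro i; fin_cases i <;> simp
  · rw [Fin.prod_univ_two]
    simp only [Matrix.cons_val_zero, Matrix.cons_val_one, Matrix.head_cons, one_smul, pow_one,
      smul_mul', smul_smul, one_mul]
    have heq : σ • a * b * ((σ * σ) • a * σ • b) = (σ • a * σ • b) * (b * ((σ * σ) • a)) := by
      ring
    rw [heq]
    exact Ideal.mul_mem_right _ _ h2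

lemma shuffleProd {P : Ideal R} (hP : IsPerfectIdeal G P) {a b : R} (h : a * b ∈ P)
    {m : ℕ} (hm : m ≠ 0) (σ : Fin m → G) (k : Fin m → ℕ) (hk : ∀ i, 1 ≤ k i) :
    (∏ i, (σ i • a) ^ k i) * b ∈ P := by
  have i0 : Fin m := ⟨0, Nat.pos_of_ne_zero hm⟩
  have hdvd : (σ i0 • a) ∣ ∏ i, (σ i • a) ^ k i :=
    dvd_trans (dvd_pow_self _ (by have := hk i0; omega))
      (Finset.dvd_prod_of_mem _ (Finset.mem_univ i0))
  obtain ⟨r, hr⟩ := hdvd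
  rw [hr]
  have h1 := shuffle hP h (σ i0)
  have heq : σ i0 • a * r * b = r * (σ i0 • a * b) := by ring
  rw [heq]
  exact Ideal.mul_mem_left _ _ h1

/-- The "colon-like" ideal `{x | ∀ y ∈ Y, x * y ∈ C}`. -/
def mulColon (C : Ideal R) (Y : Set R) : Ideal R where
  carrier := {x | ∀ y ∈ Y, x * y ∈ C}
  add_mem' := fun hx hy z hz => by
    rw [add_mul]; exact C.add_mem (hx z hz) (hy z hz)
  zero_mem' := fun z hz => by simp [C.zero_mem]
  smul_mem' := fun r x hx z hz => by
    rw [smul_eq_mul, mul_assoc]; exact Ideal.mul_mem_left _ _ (hx z hz)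

lemma mem_mulColon {C : Ideal R} {Y : Set R} {x : R} :
    x ∈ mulColon C Y ↔ ∀ y ∈ Y, x * y ∈ C := Iff.rfl

lemma mulColon_perfect {C : Ideal R} (hC : IsPerfectIdeal G C) (Y : Set R) :
    IsPerfectIdeal G (mulColon C Y) := by
  constructor
  · intro σ x hx y hy
    exact shuffle hC (hx y hy) σ
  · intro x m σ k hk hprod y hy
    rcases Nat.eq_zero_or_pos m with hm | hm
    · subst hm
      have h1 : (1 : R) * y ∈ C := by
        simpa using hprod y hy
    -- y ∈ C, so x * y ∈ C
      rw [one_mul] at h1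
      exact Ideal.mul_mem_left _ _ h1
    · apply hC.2 (x * y) m σ k hk
      have heq : (∏ i, (σ i • (x * y)) ^ k i)
          = (∏ i, (σ i • y) ^ k i) * (∏ i, (σ i • x) ^ k i) := by
        rw [← Finset.prod_mul_distrib]
        apply Finset.prod_congr rfl
        intro i _
        rw [smul_mul', mul_pow, mul_comm]
      rw [heq]
      exact shuffleProd hC (by rw [mul_comm]; exact hprod y hy) (by omega : m ≠ 0)
        σ k hk

/-- Perfect closure of a set: intersection of all perfect ideals containing it. -/
def pClo (G : Type u) [Group G] {R : Type v} [CommRing R] [MulSemiringAction G R]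
    (S : Set R) : Ideal R :=
  sInf {J | IsPerfectIdeal G J ∧ S ⊆ J}

lemma mem_pClo {S : Set R} {x : R} :
    x ∈ pClo G S ↔ ∀ J : Ideal R, IsPerfectIdeal G J → S ⊆ J → x ∈ J := by
  rw [pClo, Submodule.mem_sInf]
  exact ⟨fun h J hJ hS => h J ⟨hJ, hS⟩, fun h J hJ => h J hJ.1 hJ.2⟩

lemma pClo_le {S : Set R} {J : Ideal R} (hJ : IsPerfectIdeal G J) (hS : S ⊆ J) :
    pClo G S ≤ J :=
  sInf_le ⟨hJ, hS⟩

lemma subset_pClo {S : Set R} : S ⊆ pClo G S := by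
  intro x hx
  rw [SetLike.mem_coe, mem_pClo]
  intro J _ hS
  exact hS hx

lemma pClo_perfect (S : Set R) : IsPerfectIdeal G (pClo G S) := by
  constructor
  · intro σ a ha
    rw [mem_pClo] at ha ⊢
    intro J hJ hS
    exact hJ.1 σ a (ha J hJ hS)
  · intro a m σ k hk hprod
    rw [mem_pClo] at hprod ⊢
    intro J hJ hS
    exact hJ.2 a m σ k hk (hprod J hJ hS)

/-- Cohn's product lemma: `pClo S * pClo T ⊆ pClo (S * T)`. -/
lemma pClo_mul_mem {S T : Set R} {x y : R} (hx : x ∈ pClo G S) (hy : y ∈ pClo G T) :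
    x * y ∈ pClo G (S * T) := by
  set C : Ideal R := pClo G (S * T) with hCdef
  have hC : IsPerfectIdeal G C := pClo_perfect _
  have h1 : pClo G T ≤ mulColon C S := by
    apply pClo_le (mulColon_perfect hC S)
    intro t ht s hs
    rw [mul_comm]
    exact subset_pClo (Set.mul_mem_mul hs ht)
  have h2 : pClo G S ≤ mulColon C (pClo G T : Set R) := by
    apply pClo_le (mulColon_perfect hC _)
    intro s hs y' hy'
    have := h1 hy' s hs
    rwa [mul_comm]
  exact h2 hx y hy

end Aux

/-- In a difference ring, every maximal element of the set of proper perfect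
difference ideals is prime. -/
theorem stmt4 {G R : Type u} [Group G] [CommRing R] [MulSemiringAction G R]
    (I : Ideal R) (hI : IsPerfectIdeal G I) (hproper : I ≠ ⊤)
    (hmax : ∀ J : Ideal R, IsPerfectIdeal G J → J ≠ ⊤ → I ≤ J → J = I) :
    I.IsPrime := by
  constructor
  · exact hproper
  · intro a b hab
    by_contra hcon
    push_neg at hcon
    obtain ⟨ha, hb⟩ := hcon
    set Sa : Set R := insert a (I : Set R) with hSa
    set Sb : Set R := insert b (I : Set R) with hSb
    have hCa : pClo G Sa = ⊤ := by
      by_contra hne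
      have hle : I ≤ pClo G Sa := fun x hx => subset_pClo (Set.mem_insert_of_mem _ hx)
      have := hmax (pClo G Sa) (pClo_perfect _) hne hle
      exact ha (this ▸ subset_pClo (Set.mem_insert _ _))
    have hCb : pClo G Sb = ⊤ := by
      by_contra hne
      have hle : I ≤ pClo G Sb := fun x hx => subset_pClo (Set.mem_insert_of_mem _ hx)
      have := hmax (pClo G Sb) (pClo_perfect _) hne hle
      exact hb (this ▸ subset_pClo (Set.mem_insert _ _))
    have h1 : (1 : R) ∈ pClo G Sa := hCa ▸ Submodule.mem_top
    have h2 : (1 : R) ∈ pClo G Sb := hCb ▸ Submodule.mem_top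
    have hmul : (1 : R) * 1 ∈ pClo G (Sa * Sb) := pClo_mul_mem h1 h2
    have hsub : Sa * Sb ⊆ (I : Set R) := by
      rintro _ ⟨s, hs, t, ht, rfl⟩
      rcases hs with rfl | hs
      · rcases ht with rfl | ht
        · exact hab
        · exact Ideal.mul_mem_left _ _ ht
      · exact Ideal.mul_mem_right _ _ hs
    have hle : pClo G (Sa * Sb) ≤ I := pClo_le hI hsub
    have : (1 : R) ∈ I := hle (by simpa using hmul)
    exact hproper ((Ideal.eq_top_iff_one I).mpr this)
end

section
/- Every simple difference ring can be embedded (by an injective difference homomorphism) into a pseudofield, i.e., into an absolutely flat simple difference ring. -/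
open MvPolynomial

universe u v

variable {G : Type u} [Group G]

set_option synthInstance.maxHeartbeats 1000000
set_option maxHeartbeats 1000000

section Aux

/-- Right-translation action of `G` on functions `G → K`. -/
def funAct (K : Type v) [CommRing K] : MulSemiringAction G (G → K) where
  smul σ f := fun τ => f (τ * σ)
  one_smul f := funext fun τ => by show f (τ * 1) = f τ; rw [mul_one]
  mul_smul σ τ f := funext fun ρ => by show f (ρ * (σ * τ)) = f (ρ * σ * τ); rw [mul_assoc]
  smul_zero σ := rfl
  smul_add σ f g := rfl
  smul_one σ := rfl
  smul_mul σ f g := rfl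

variable {A : Type v} [CommRing A] [MulSemiringAction G A]

noncomputable def stableQuotHom (I : Ideal A) (hI : IsStableIdeal G I) (σ : G) :
    A ⧸ I →+* A ⧸ I :=
  Ideal.Quotient.lift I ((Ideal.Quotient.mk I).comp (MulSemiringAction.toRingHom G A σ))
    (fun a ha => by
      simpa using Ideal.Quotient.eq_zero_iff_mem.2 (hI σ a ha))

lemma stableQuotHom_mk (I : Ideal A) (hI : IsStableIdeal G I) (σ : G) (a : A) :
    stableQuotHom I hI σ (Ideal.Quotient.mk I a) = Ideal.Quotient.mk I (σ • a) := rfl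

noncomputable def stableQuotAct (I : Ideal A) (hI : IsStableIdeal G I) :
    MulSemiringAction G (A ⧸ I) where
  smul σ x := stableQuotHom I hI σ x
  one_smul x := by
    obtain ⟨a, rfl⟩ := Ideal.Quotient.mk_surjective x
    show stableQuotHom I hI 1 _ = _
    rw [stableQuotHom_mk, one_smul]
  mul_smul σ τ x := by
    obtain ⟨a, rfl⟩ := Ideal.Quotient.mk_surjective x
    show stableQuotHom I hI (σ * τ) _ = stableQuotHom I hI σ (stableQuotHom I hI τ _)
    rw [stableQuotHom_mk, stableQuotHom_mk, stableQuotHom_mk, mul_smul]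
  smul_zero σ := map_zero (stableQuotHom I hI σ)
  smul_add σ x y := map_add _ x y
  smul_one σ := map_one (stableQuotHom I hI σ)
  smul_mul σ x y := map_mul _ x y

end Aux

/-- Every simple difference ring can be embedded into a pseudofield. -/
theorem stmt6 {G R : Type u} [Group G] [CommRing R] [MulSemiringAction G R]
    (h : IsSimpleDiffRing G R) :
    ∃ (L : DiffRingExt.{u, u} G) (φ : R →+* L.carrier),
      Function.Injective φ ∧ (∀ (σ : G) (a : R), φ (σ • a) = σ • φ a) ∧
      IsPseudofield G L.carrier := by
  obtain ⟨hnt, hsimple⟩ := h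
  haveI : Nontrivial R := hnt
  obtain ⟨𝔪, h𝔪⟩ := Ideal.exists_maximal R
  haveI := h𝔪
  set K := R ⧸ 𝔪 with hK
  haveI : Nontrivial K := Ideal.Quotient.nontrivial_iff.mpr h𝔪.ne_top
  haveI : Nonempty G := ⟨1⟩
  letI actL0 : MulSemiringAction G (G → K) := funAct K
  -- the regularity of K
  have hKreg : ∀ a : K, ∃ b : K, a * b * a = a := by
    intro a
    rcases eq_or_ne a 0 with rfl | ha
    · exact ⟨0, by ring⟩
    · obtain ⟨b, hb⟩ := Ideal.Quotient.exists_inv ha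
      exact ⟨b, by rw [hb, one_mul]⟩
  have hreg : ∀ f : G → K, ∃ g : G → K, f * g * f = f := by
    intro f
    choose g hg using fun τ => hKreg (f τ)
    exact ⟨g, funext fun τ => hg τ⟩
  -- the base embedding
  let φ₀ : R →+* (G → K) :=
    Pi.ringHom (fun τ => (Ideal.Quotient.mk 𝔪).comp (MulSemiringAction.toRingHom G R τ))
  have hφ₀ : ∀ (σ : G) (a : R), φ₀ (σ • a) = σ • φ₀ a := by
    intro σ a
    funext τ
    show Ideal.Quotient.mk 𝔪 (τ • σ • a) = Ideal.Quotient.mk 𝔪 ((τ * σ) • a)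
    rw [mul_smul]
  -- a maximal stable proper ideal via Zorn
  set S : Set (Ideal (G → K)) := {I | IsStableIdeal G I ∧ I ≠ ⊤} with hS
  have hbot : (⊥ : Ideal (G → K)) ∈ S := by
    constructor
    · intro σ a ha
      rw [Ideal.mem_bot] at ha ⊢
      rw [ha, smul_zero]
    · intro hb
      have : (1 : G → K) ∈ (⊥ : Ideal (G → K)) := hb ▸ Submodule.mem_top
      exact one_ne_zero (Ideal.mem_bot.mp this)
  obtain ⟨I, -, hImem, hImax⟩ := zorn_le_nonempty₀ S (fun c hcS hc y hy => by
      haveI : Nonempty c := ⟨⟨y, hy⟩⟩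
      have hdir : Directed (· ≤ ·) (fun J : c => (J : Ideal (G → K))) :=
        hc.directedOn.directed_val
      refine ⟨⨆ J : c, (J : Ideal (G → K)), ⟨?_, ?_⟩, ?_⟩
      · intro σ a ha
        obtain ⟨J, hJ⟩ := (Submodule.mem_iSup_of_directed _ hdir).mp ha
        exact (Submodule.mem_iSup_of_directed _ hdir).mpr ⟨J, (hcS J.2).1 σ a hJ⟩
      · intro htop
        have : (1 : G → K) ∈ (⨆ J : c, (J : Ideal (G → K))) := htop ▸ Submodule.mem_top
        obtain ⟨J, hJ⟩ := (Submodule.mem_iSup_of_directed _ hdir).mp this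
        exact (hcS J.2).2 ((Ideal.eq_top_iff_one _).mpr hJ)
      · intro z hz
        exact le_iSup (fun J : c => (J : Ideal (G → K))) ⟨z, hz⟩) ⊥ hbot
  obtain ⟨hIstable, hItop⟩ := hImem
  -- the quotient pseudofield
  letI actQ : MulSemiringAction G ((G → K) ⧸ I) := stableQuotAct I hIstable
  have hmk : ∀ (σ : G) (f : G → K),
      Ideal.Quotient.mk I (σ • f) = σ • Ideal.Quotient.mk I f := fun σ f => rfl
  haveI hQnt : Nontrivial ((G → K) ⧸ I) := Ideal.Quotient.nontrivial_iff.mpr hItop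
  let φ : R →+* ((G → K) ⧸ I) := (Ideal.Quotient.mk I).comp φ₀
  have hφ : ∀ (σ : G) (a : R), φ (σ • a) = σ • φ a := by
    intro σ a
    show Ideal.Quotient.mk I (φ₀ (σ • a)) = σ • Ideal.Quotient.mk I (φ₀ a)
    rw [hφ₀, hmk]
  -- injectivity
  have hinj : Function.Injective φ := by
    rw [RingHom.injective_iff_ker_eq_bot]
    rcases hsimple (RingHom.ker φ) (by
        intro σ a ha
        rw [RingHom.mem_ker] at ha ⊢
        rw [hφ, ha, smul_zero]) with hker | hker
    · exact hker
    · exfalso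
      have h1 : (1 : R) ∈ RingHom.ker φ := hker ▸ Submodule.mem_top
      rw [RingHom.mem_ker, map_one] at h1
      exact one_ne_zero h1
  -- simplicity of the quotient
  have hsimpleQ : IsSimpleDiffRing G ((G → K) ⧸ I) := by
    refine ⟨hQnt, fun J hJ => ?_⟩
    set J' : Ideal (G → K) := Ideal.comap (Ideal.Quotient.mk I) J with hJ'
    have hJ'stable : IsStableIdeal G J' := by
      intro σ a ha
      rw [Ideal.mem_comap] at ha ⊢
      rw [hmk]
      exact hJ σ _ ha
    have hIJ' : I ≤ J' := by
      intro x hx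
      rw [Ideal.mem_comap, Ideal.Quotient.eq_zero_iff_mem.mpr hx]
      exact J.zero_mem
    rcases eq_or_ne J' ⊤ with htop | hne
    · right
      rw [Ideal.eq_top_iff_one]
      have : (1 : G → K) ∈ J' := htop ▸ Submodule.mem_top
      simpa [hJ'] using this
    · left
      have : J' = I := le_antisymm (hImax ⟨hJ'stable, hne⟩ hIJ') hIJ'
      rw [eq_bot_iff]
      intro x hx
      obtain ⟨f, rfl⟩ := Ideal.Quotient.mk_surjective x
      have hf : f ∈ J' := hx
      rw [this] at hf
      rw [Ideal.mem_bot]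
      exact Ideal.Quotient.eq_zero_iff_mem.mpr hf
  -- regularity of the quotient
  have hregQ : ∀ a : (G → K) ⧸ I, ∃ x, a * x * a = a := by
    intro a
    obtain ⟨f, rfl⟩ := Ideal.Quotient.mk_surjective a
    obtain ⟨g, hg⟩ := hreg f
    exact ⟨Ideal.Quotient.mk I g, by rw [← map_mul, ← map_mul, hg]⟩
  exact ⟨DiffRingExt.mk ((G → K) ⧸ I), φ, hinj, hφ, hsimpleQ, hregQ⟩
end

section
/- Let A be a pseudofield (absolutely flat simple difference ring), and let B and C be nonzero difference A-algebras. Then the difference algebra B ⊗_A C is nonzero. -/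
open MvPolynomial

universe u v

variable {G : Type u} [Group G]

open TensorProduct in
private theorem pf_locField {A : Type u} [CommRing A] [Nontrivial A]
    (hvn : ∀ a : A, ∃ x : A, a * x * a = a)
    (q : Ideal A) [q.IsPrime] : IsField (Localization.AtPrime q) := by
  set k := Localization.AtPrime q
  refine ⟨exists_pair_ne k, mul_comm, ?_⟩
  intro z hz
  obtain ⟨⟨a, s⟩, hmk⟩ := IsLocalization.mk'_surjective q.primeCompl z
  obtain rfl : IsLocalization.mk' k a s = z := hmk
  obtain ⟨x, hx⟩ := hvn a
  set a' := algebraMap A k a with ha'def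
  have key : a' * ((algebraMap A k x) * a' - 1) = 0 := by
    have := congrArg (algebraMap A k) hx
    push_cast [map_mul] at this
    linear_combination this
  rcases IsLocalRing.isUnit_or_isUnit_one_sub_self ((algebraMap A k x) * a') with hu | hu
  · have ha' : IsUnit a' := isUnit_of_mul_isUnit_right (by rwa [mul_comm] at hu)
    have hspec : IsLocalization.mk' k a s * algebraMap A k s = a' := IsLocalization.mk'_spec k a s
    have : IsUnit (IsLocalization.mk' k a s) := isUnit_of_mul_isUnit_left (hspec ▸ ha')
    obtain ⟨u, hu'⟩ := this
    exact ⟨↑u⁻¹, by rw [← hu']; exact u.mul_inv⟩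
  · exfalso
    apply hz
    have ha0 : a' = 0 := by
      calc a' = a' * hu.unit * ↑hu.unit⁻¹ := by rw [mul_assoc, Units.mul_inv, mul_one]
        _ = 0 := by rw [hu.unit_spec]; rw [show a' * (1 - algebraMap A k x * a') = 0 by
              linear_combination -key]; simp
    rw [IsLocalization.mk'_eq_mul_mk'_one, ← ha'def, ha0, zero_mul]

open TensorProduct in
private theorem pf_tensorLocNontrivial {A B : Type u} [CommRing A] [CommRing B] [Algebra A B]
    (q : Ideal A) [q.IsPrime] (hinj : Function.Injective (algebraMap A B)) :
    Nontrivial ((Localization.AtPrime q) ⊗[A] B) := by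
  set k := Localization.AtPrime q
  have hinj2 : Function.Injective (LinearMap.lTensor k (Algebra.linearMap A B)) :=
    Module.Flat.lTensor_preserves_injective_linearMap _ hinj
  have h1 : (1 : k ⊗[A] B) ≠ 0 := by
    intro h
    have e : (LinearMap.lTensor k (Algebra.linearMap A B)) (1 ⊗ₜ 1) = (1 : k ⊗[A] B) := by
      simp [Algebra.TensorProduct.one_def]
    have : (1 ⊗ₜ (1:A) : k ⊗[A] A) = 0 := hinj2 (by rw [e, map_zero, h])
    have := congrArg (TensorProduct.rid A k) this
    simp at this
  exact nontrivial_of_ne 1 0 h1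

open TensorProduct in
private theorem pf_assemble {A B C k : Type u} [CommRing A] [CommRing B] [Algebra A B]
    [CommRing C] [Algebra A C] [Field k] [Algebra A k]
    (h1 : Nontrivial (k ⊗[A] B)) (h2 : Nontrivial (k ⊗[A] C)) :
    Nontrivial (B ⊗[A] C) := by
  haveI := h1; haveI := h2
  haveI hD : Nontrivial ((k ⊗[A] B) ⊗[k] (k ⊗[A] C)) := inferInstance
  let f1 : (k ⊗[A] B) →ₐ[k] (k ⊗[A] B) ⊗[k] (k ⊗[A] C) := Algebra.TensorProduct.includeLeft
  let f2 : (k ⊗[A] C) →ₐ[k] (k ⊗[A] B) ⊗[k] (k ⊗[A] C) := Algebra.TensorProduct.includeRight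
  let f : B →ₐ[A] (k ⊗[A] B) ⊗[k] (k ⊗[A] C) :=
    (f1.restrictScalars A).comp (Algebra.TensorProduct.includeRight (R := A) (A := k) (B := B))
  let g : C →ₐ[A] (k ⊗[A] B) ⊗[k] (k ⊗[A] C) :=
    (f2.restrictScalars A).comp (Algebra.TensorProduct.includeRight (R := A) (A := k) (B := C))
  exact (Algebra.TensorProduct.productMap f g).toRingHom.domain_nontrivial

private theorem pf_inj {G A B : Type u} [Group G] [CommRing A] [MulSemiringAction G A]
    [CommRing B] [MulSemiringAction G B] [Algebra A B] [Nontrivial B]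
    (hA : Nontrivial A ∧ ∀ I : Ideal A, (∀ σ : G, ∀ a ∈ I, σ • a ∈ I) → I = ⊥ ∨ I = ⊤)
    (hB : ∀ (σ : G) (a : A), algebraMap A B (σ • a) = σ • algebraMap A B a) :
    Function.Injective (algebraMap A B) := by
  have := hA.1
  have h := hA.2 (RingHom.ker (algebraMap A B)) (fun σ a ha => by
    simp only [RingHom.mem_ker] at ha ⊢
    rw [hB, ha, smul_zero])
  rcases h with h | h
  · rwa [← RingHom.injective_iff_ker_eq_bot] at h
  · exact absurd (h ▸ Submodule.mem_top : (1:A) ∈ RingHom.ker (algebraMap A B))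
      (by simp [RingHom.mem_ker])


open TensorProduct in
/-- Over a pseudofield `A`, the tensor product of two nonzero difference
`A`-algebras is nonzero. -/
theorem stmt7 {G A B C : Type u} [Group G] [CommRing A] [MulSemiringAction G A]
    [CommRing B] [MulSemiringAction G B] [Algebra A B] [Nontrivial B]
    [CommRing C] [MulSemiringAction G C] [Algebra A C] [Nontrivial C]
    (hA : IsPseudofield G A)
    (hB : ∀ (σ : G) (a : A), algebraMap A B (σ • a) = σ • algebraMap A B a)
    (hC : ∀ (σ : G) (a : A), algebraMap A C (σ • a) = σ • algebraMap A C a) :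
    Nontrivial (B ⊗[A] C) := by
  haveI : Nontrivial A := hA.1.1
  obtain ⟨q, hq⟩ := Ideal.exists_maximal A
  haveI : q.IsPrime := hq.isPrime
  letI : Field (Localization.AtPrime q) := (pf_locField hA.2 q).toField
  exact pf_assemble (k := Localization.AtPrime q)
    (pf_tensorLocNontrivial q (pf_inj hA.1 hB))
    (pf_tensorLocNontrivial q (pf_inj hA.1 hC))
end

section
/- Let Σ be a group and κ the cardinality of the set of ultrafilters on Σ. Then for every pseudofield L with difference structure given by Σ, the cardinality of Spec L is at most κ. -/
open MvPolynomial

universe u v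

variable {G : Type u} [Group G]

section Aux

open scoped Classical

variable {α K : Type u} [Field K]

/-- Function vanishing on `S` and `1` off `S`. -/
noncomputable def chi (K : Type u) [Field K] (S : Set α) : α → K :=
  fun a => if a ∈ S then 0 else 1

lemma chi_apply_of_mem {S : Set α} {a : α} (h : a ∈ S) : chi K S a = 0 := by
  simp [chi, h]

lemma chi_apply_of_not_mem {S : Set α} {a : α} (h : a ∉ S) : chi K S a = 1 := by
  simp [chi, h]

lemma chi_mul_compl (S : Set α) : chi K S * chi K Sᶜ = 0 := by
  funext a
  by_cases h : a ∈ S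
  · simp [chi_apply_of_mem h]
  · simp [chi_apply_of_mem (by simpa using h : a ∈ Sᶜ)]

lemma chi_add_compl (S : Set α) : chi K S + chi K Sᶜ = 1 := by
  funext a
  by_cases h : a ∈ S
  · simp [chi_apply_of_mem h, chi_apply_of_not_mem (by simpa using h : a ∉ Sᶜ)]
  · simp [chi_apply_of_not_mem h, chi_apply_of_mem (by simpa using h : a ∈ Sᶜ)]

lemma chi_mem_or (Q : Ideal (α → K)) (hQ : Q.IsPrime) (S : Set α) :
    chi K S ∈ Q ∨ chi K Sᶜ ∈ Q :=
  hQ.mem_or_mem (by rw [chi_mul_compl]; exact Q.zero_mem)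

lemma chi_not_both (Q : Ideal (α → K)) (hQ : Q.IsPrime) (S : Set α)
    (h1 : chi K S ∈ Q) (h2 : chi K Sᶜ ∈ Q) : False := by
  have h := Q.add_mem h1 h2
  rw [chi_add_compl] at h
  exact hQ.ne_top ((Ideal.eq_top_iff_one Q).mpr h)

/-- The ultrafilter associated to a prime ideal of a product of fields. -/
noncomputable def primeUltra (Q : Ideal (α → K)) (hQ : Q.IsPrime) : Ultrafilter α :=
  Ultrafilter.ofComplNotMemIff
    { sets := {S | chi K S ∈ Q}
      univ_sets := by
        have h : chi K (Set.univ : Set α) = 0 := by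
          funext a; exact chi_apply_of_mem trivial
        show chi K (Set.univ : Set α) ∈ Q
        rw [h]; exact Q.zero_mem
      sets_of_superset := by
        intro S T hS hST
        have h : chi K T = chi K S * chi K T := by
          funext a
          by_cases h : a ∈ T
          · simp [chi_apply_of_mem h]
          · have h' : a ∉ S := fun hc => h (hST hc)
            simp [chi_apply_of_not_mem h, chi_apply_of_not_mem h']
        show chi K T ∈ Q
        rw [h]; exact Q.mul_mem_right _ hS
      inter_sets := by
        intro S T hS hT
        have h : chi K (S ∩ T) = chi K S + chi K T - chi K S * chi K T := by
          funext a
          by_cases h1 : a ∈ S <;> by_cases h2 : a ∈ T <;>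
            simp [Pi.add_apply, Pi.sub_apply, Pi.mul_apply,
              chi_apply_of_mem, chi_apply_of_not_mem, h1, h2,
              (by simp [Set.mem_inter_iff, h1, h2] : (a ∈ S ∩ T) ↔ (a ∈ S ∧ a ∈ T)), chi]
        show chi K (S ∩ T) ∈ Q
        rw [h]
        exact Ideal.sub_mem _ (Q.add_mem hS hT) (Q.mul_mem_right _ hS) }
    (by
      intro S
      constructor
      · intro h
        rcases chi_mem_or Q hQ S with h' | h'
        · exact h'
        · exact absurd h' h
      · intro h hc
        exact chi_not_both Q hQ S h hc)

lemma mem_primeUltra (Q : Ideal (α → K)) (hQ : Q.IsPrime) (S : Set α) :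
    S ∈ primeUltra Q hQ ↔ chi K S ∈ Q := Iff.rfl

lemma mem_prime_iff (Q : Ideal (α → K)) (f : α → K) :
    f ∈ Q ↔ chi K {a | f a = 0} ∈ Q := by
  constructor
  · intro hf
    have h : chi K {a | f a = 0} = f * fun a => (f a)⁻¹ := by
      funext a
      by_cases h : f a = 0
      · rw [Pi.mul_apply, chi_apply_of_mem (show a ∈ {a | f a = 0} from h), h, zero_mul]
      · rw [Pi.mul_apply, chi_apply_of_not_mem (show a ∉ {a | f a = 0} from h),
          mul_inv_cancel₀ h]
    rw [h]; exact Q.mul_mem_right _ hf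
  · intro hf
    have h : f = chi K {a | f a = 0} * f := by
      funext a
      by_cases h : f a = 0
      · rw [Pi.mul_apply, h, mul_zero]
      · rw [Pi.mul_apply, chi_apply_of_not_mem (show a ∉ {a | f a = 0} from h), one_mul]
    rw [h]; exact Q.mul_mem_right _ hf

lemma prime_eq_of_ultra (Q1 Q2 : Ideal (α → K)) (h1 : Q1.IsPrime) (h2 : Q2.IsPrime)
    (h : primeUltra Q1 h1 = primeUltra Q2 h2) : Q1 = Q2 := by
  ext f
  rw [mem_prime_iff Q1, mem_prime_iff Q2,
    ← mem_primeUltra Q1 h1, ← mem_primeUltra Q2 h2, h]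

end Aux

/-- For a pseudofield `L` over `Σ = G`, `|Spec L|` is at most the number of
ultrafilters on `G`. -/
theorem stmt9 {G L : Type u} [Group G] [CommRing L] [MulSemiringAction G L]
    (hL : IsPseudofield G L) :
    Cardinal.mk (PrimeSpectrum L) ≤ Cardinal.mk (Ultrafilter G) := by
  obtain ⟨⟨hnt, hsimp⟩, hreg⟩ := hL
  haveI : Nontrivial L := hnt
  obtain ⟨m, hm⟩ := Ideal.exists_maximal L
  haveI : m.IsMaximal := hm
  letI : Field (L ⧸ m) := Ideal.Quotient.field m
  set φ : L →+* (G → L ⧸ m) :=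
    Pi.ringHom fun σ => (Ideal.Quotient.mk m).comp (MulSemiringAction.toRingHom G L σ) with hφdef
  have hφapp : ∀ (a : L) (σ : G), φ a σ = Ideal.Quotient.mk m (σ • a) := fun a σ => rfl
  -- the kernel of φ is a stable ideal
  have hstab : IsStableIdeal G (RingHom.ker φ) := by
    intro τ a ha
    rw [RingHom.mem_ker] at ha ⊢
    funext σ
    have h1 := congrFun ha (σ * τ)
    rw [hφapp, mul_smul] at h1
    rw [hφapp]
    simpa using h1
  have hker : RingHom.ker φ = ⊥ := by
    rcases hsimp _ hstab with h | h
    · exact h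
    · exfalso
      have h1 : (1 : L) ∈ RingHom.ker φ := h ▸ Submodule.mem_top
      rw [RingHom.mem_ker, map_one] at h1
      exact one_ne_zero h1
  have hφ : Function.Injective φ := (RingHom.injective_iff_ker_eq_bot φ).mpr hker
  -- every prime of L is minimal
  have hmin : ∀ q : PrimeSpectrum L, q.asIdeal ∈ minimalPrimes L := by
    intro q
    refine ⟨⟨q.2, bot_le⟩, ?_⟩
    rintro p ⟨hp, -⟩ hpq a ha
    obtain ⟨x, hx⟩ := hreg a
    have h0 : a * (x * a - 1) ∈ p := by
      have he : a * (x * a - 1) = a * x * a - a := by ring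
      rw [he, hx, sub_self]
      exact p.zero_mem
    rcases hp.mem_or_mem h0 with h | h
    · exact h
    · exfalso
      have hxa : x * a ∈ q.asIdeal := q.asIdeal.mul_mem_left x ha
      have h1 : (1 : L) ∈ q.asIdeal := by
        have h2 := q.asIdeal.sub_mem hxa (hpq h)
        simpa using h2
      exact q.2.ne_top ((Ideal.eq_top_iff_one _).mpr h1)
  -- lift each prime of L to a prime of the product ring
  have key : ∀ q : PrimeSpectrum L,
      ∃ Q : Ideal (G → L ⧸ m), Q.IsPrime ∧ Q.comap φ = q.asIdeal := fun q =>
    Ideal.exists_comap_eq_of_mem_minimalPrimes_of_injective hφ q.asIdeal (hmin q)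
  choose Q hQp hQc using key
  have hinj : Function.Injective fun q : PrimeSpectrum L => primeUltra (Q q) (hQp q) := by
    intro q1 q2 h
    have hQeq : Q q1 = Q q2 := prime_eq_of_ultra _ _ (hQp q1) (hQp q2) h
    ext : 1
    · rw [← hQc q1, ← hQc q2, hQeq]
  exact Cardinal.mk_le_of_injective hinj
end

section
/- Let Σ be an infinite group, κ the cardinality of the set of ultrafilters on Σ, and K a pseudofield. Then the partially ordered set of radical difference ideals of K{y₁,…,yₙ} (ordered by inclusion) is (|Σ|·κ)-noetherian: every strictly ascending chain of radical difference ideals has cardinality at most |Σ|·κ. -/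
open MvPolynomial

universe u v

variable {G : Type u} [Group G]

def IsKNoetherian (S : Type u) [Preorder S] (κ : Cardinal.{u}) : Prop :=
  ∀ (ι : Type u) [LinearOrder ι] (f : ι → S), StrictMono f → Cardinal.mk ι ≤ κ

/-! ### Auxiliary material for the proof -/

open Cardinal

namespace Stmt15Aux

/-! #### Pospíšil's theorem: there are `2 ^ 2 ^ #α` ultrafilters on an infinite `α` -/

variable {α : Type u}

/-- Index type for the independent family: pairs of a finite set `s` and a
family of subsets of `s`. -/
abbrev Q (α : Type u) : Type u := Σ s : Finset α, Set (Set {x : α // x ∈ s})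

/-- The independent family itself. -/
def E (X : Set α) : Set (Q α) := {q | {x : {y : α // y ∈ q.1} | ↑x ∈ X} ∈ q.2}

theorem mem_E_singleton (a : α) (X : Set α) :
    (⟨{a}, {A | ⟨a, Finset.mem_singleton_self a⟩ ∈ A}⟩ : Q α) ∈ E X ↔ a ∈ X := by
  simp [E]

theorem E_injective : Function.Injective (E (α := α)) := fun X Y h => by
  ext a
  rw [← mem_E_singleton a X, ← mem_E_singleton a Y, h]

theorem key [Nonempty α] (T₁ T₂ : Finset (Set α)) (hd : ∀ X ∈ T₁, ∀ Y ∈ T₂, X ≠ Y) :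
    ∃ q : Q α, (∀ X ∈ T₁, q ∈ E X) ∧ (∀ Y ∈ T₂, q ∉ E Y) := by
  classical
  let c : Set α → Set α → α := fun X Y =>
    if h : ∃ a, ¬(a ∈ X ↔ a ∈ Y) then h.choose else Classical.arbitrary α
  have hc : ∀ X Y : Set α, X ≠ Y → ¬(c X Y ∈ X ↔ c X Y ∈ Y) := by
    intro X Y hXY
    have h : ∃ a, ¬(a ∈ X ↔ a ∈ Y) := by
      by_contra hcon
      push_neg at hcon
      exact hXY (Set.ext fun a => (hcon a))
    simpa only [c, dif_pos h] using h.choose_spec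
  set s₀ : Finset α := (T₁ ×ˢ T₂).image (fun p => c p.1 p.2) with hs₀
  set A₀ : Set (Set {x : α // x ∈ s₀}) :=
    (fun X : Set α => {x : {y : α // y ∈ s₀} | ↑x ∈ X}) '' ↑T₁ with hA₀
  refine ⟨⟨s₀, A₀⟩, fun X hX => ?_, fun Y hY hmem => ?_⟩
  · exact Set.mem_image_of_mem _ (by exact_mod_cast hX)
  · obtain ⟨X, hX, heq⟩ := hmem
    have hX' : X ∈ T₁ := by exact_mod_cast hX
    have hne : X ≠ Y := hd X hX' Y hY
    have hmem_s : c X Y ∈ s₀ := by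
      rw [hs₀]
      exact Finset.mem_image.2 ⟨(X, Y), Finset.mem_product.2 ⟨hX', hY⟩, rfl⟩
    have := Set.ext_iff.mp heq ⟨c X Y, hmem_s⟩
    simp only [Set.mem_setOf_eq] at this
    exact hc X Y hne this

/-- The generating family of the filter associated to `S`. -/
def gen (S : Set (Set α)) : Set (Set (Q α)) := (E '' S) ∪ ((fun X => (E X)ᶜ) '' Sᶜ)

theorem gen_neBot [Nonempty α] (S : Set (Set α)) : (Filter.generate (gen S)).NeBot := by
  classical
  rw [Filter.generate_neBot_iff]
  intro t hsub hfin
  have h₁ : (E ⁻¹' t ∩ S).Finite := (hfin.preimage (E_injective.injOn)).inter_of_left S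
  have h₂ : ((fun X => (E X)ᶜ) ⁻¹' t ∩ Sᶜ).Finite := by
    refine (hfin.preimage ?_).inter_of_left Sᶜ
    intro X _ Y _ h
    exact E_injective (compl_injective h)
  obtain ⟨q, hq₁, hq₂⟩ := key h₁.toFinset h₂.toFinset (by
    intro X hX Y hY
    have hX' := (h₁.mem_toFinset.1 hX).2
    have hY' := (h₂.mem_toFinset.1 hY).2
    intro h; exact hY' (h ▸ hX'))
  refine ⟨q, ?_⟩
  intro A hA
  rcases hsub hA with ⟨X, hXS, rfl⟩ | ⟨Y, hYS, rfl⟩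
  · exact hq₁ X (h₁.mem_toFinset.2 ⟨hA, hXS⟩)
  · exact hq₂ Y (h₂.mem_toFinset.2 ⟨hA, hYS⟩)

/-- For each family `S` of subsets of `α`, an ultrafilter containing `E X` for `X ∈ S`
and `(E X)ᶜ` for `X ∉ S`. -/
noncomputable def U [Nonempty α] (S : Set (Set α)) : Ultrafilter (Q α) :=
  have := gen_neBot S
  (Ultrafilter.exists_le (Filter.generate (gen S))).choose

theorem gen_subset_U [Nonempty α] (S : Set (Set α)) : ∀ A ∈ gen S, A ∈ U S := by
  intro A hA
  have := gen_neBot S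
  have hle := (Ultrafilter.exists_le (Filter.generate (gen S))).choose_spec
  exact hle (Filter.GenerateSets.basic hA)

theorem U_injective [Nonempty α] : Function.Injective (U (α := α)) := by
  intro S S' h
  by_contra hne
  have : ∃ X, ¬(X ∈ S ↔ X ∈ S') := by
    by_contra hcon
    push_neg at hcon
    exact hne (Set.ext fun X => hcon X)
  obtain ⟨X, hX⟩ := this
  rcases Classical.em (X ∈ S) with hXS | hXS
  · have hXS' : X ∉ S' := fun hc => hX ⟨fun _ => hc, fun _ => hXS⟩
    have h1 : E X ∈ U S := gen_subset_U S (E X) (Or.inl ⟨X, hXS, rfl⟩)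
    have h2 : (E X)ᶜ ∈ U S' := gen_subset_U S' _ (Or.inr ⟨X, hXS', rfl⟩)
    rw [h] at h1
    have hmem := Filter.inter_mem h1 h2
    rw [Set.inter_compl_self] at hmem
    exact Filter.empty_notMem (U S' : Filter (Q α)) hmem
  · have hXS' : X ∈ S' := by
      rcases Classical.em (X ∈ S') with h' | h'
      · exact h'
      · exact absurd ⟨fun hc => absurd hc hXS, fun hc => absurd hc h'⟩ hX
    have h1 : E X ∈ U S' := gen_subset_U S' (E X) (Or.inl ⟨X, hXS', rfl⟩)
    have h2 : (E X)ᶜ ∈ U S := gen_subset_U S _ (Or.inr ⟨X, hXS, rfl⟩)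
    rw [h] at h2
    have hmem := Filter.inter_mem h1 h2
    rw [Set.inter_compl_self] at hmem
    exact Filter.empty_notMem (U S' : Filter (Q α)) hmem

theorem mk_Q (α : Type u) [Infinite α] : #(Q α) = #α := by
  apply le_antisymm
  · calc #(Q α) = Cardinal.sum (fun s : Finset α => #(Set (Set {x : α // x ∈ s}))) :=
          mk_sigma _
      _ ≤ Cardinal.sum (fun _ : Finset α => ℵ₀) := by
          apply Cardinal.sum_le_sum
          intro s
          exact (lt_aleph0_of_finite _).le
      _ = #(Finset α) * ℵ₀ := by rw [Cardinal.sum_const']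
      _ = #α * ℵ₀ := by rw [Cardinal.mk_finset_of_infinite]
      _ = #α := by
          rw [Cardinal.mul_eq_max (Cardinal.aleph0_le_mk α) le_rfl]
          exact max_eq_left (Cardinal.aleph0_le_mk α)
  · exact mk_le_of_injective (f := fun a : α => (⟨{a}, ∅⟩ : Q α))
      (fun a b h => by simpa using congrArg (fun q : Q α => q.1) h)

/-- Pospíšil's theorem, lower-bound half. -/
theorem pospisil (α : Type u) [Infinite α] :
    (2 : Cardinal.{u}) ^ ((2 : Cardinal.{u}) ^ #α) ≤ #(Ultrafilter α) := by
  have h1 : (2 : Cardinal.{u}) ^ ((2 : Cardinal.{u}) ^ #α) ≤ #(Ultrafilter (Q α)) := by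
    have h2 := mk_le_of_injective (U_injective (α := α))
    calc (2 : Cardinal.{u}) ^ ((2 : Cardinal.{u}) ^ #α) = #(Set (Set α)) := by
          rw [mk_set, mk_set]
      _ ≤ #(Ultrafilter (Q α)) := h2
  obtain ⟨e⟩ := Cardinal.eq.mp (mk_Q α)
  refine h1.trans (mk_le_of_injective (f := fun u : Ultrafilter (Q α) => u.map e) ?_)
  intro u v huv
  have : ∀ w : Ultrafilter (Q α), (w.map e).map e.symm = w := by
    intro w
    ext A
    simp only [Ultrafilter.mem_map]
    have : e ⁻¹' (e.symm ⁻¹' A) = A := by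
      ext x; simp
    rw [this]
  simp only at huv
  rw [← this u, ← this v, huv]

/-! #### Counting chains of submodules over a von Neumann regular ring -/

variable {K : Type u} [CommRing K]

/-- The idempotents of `K`. -/
abbrev Idem (K : Type u) [CommRing K] : Type u := {e : K // e * e = e}

/-- In a von Neumann regular commutative ring, an ideal is determined by the
idempotents it contains. -/
theorem ideal_det_by_idem (hv : ∀ a : K, ∃ x : K, a * x * a = a)
    {I J : Submodule K K} (h : {e : Idem K | (e : K) ∈ I} = {e : Idem K | (e : K) ∈ J}) :
    I = J := by
  have main : ∀ I J : Submodule K K,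
      {e : Idem K | (e : K) ∈ I} = {e : Idem K | (e : K) ∈ J} → I ≤ J := by
    intro I J h a ha
    obtain ⟨x, hx⟩ := hv a
    have he : (a * x) * (a * x) = a * x := by
      calc (a * x) * (a * x) = (a * x * a) * x := by ring
        _ = a * x := by rw [hx]
    have haxI : a * x ∈ I := by
      have := I.smul_mem x ha
      simpa [smul_eq_mul, mul_comm] using this
    have : (⟨a * x, he⟩ : Idem K) ∈ {e : Idem K | (e : K) ∈ J} := h ▸ haxI
    have haxJ : a * x ∈ J := this
    have : a • (a * x) ∈ J := J.smul_mem a haxJ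
    simpa [smul_eq_mul, show a * (a * x) = a * x * a by ring, hx] using this
  exact le_antisymm (main I J h) (main J I h.symm)

/-- Any family of ideals of a von Neumann regular ring has cardinality at most
`2 ^ #(Idem K)`. -/
theorem mk_ideal_family_le (hv : ∀ a : K, ∃ x : K, a * x * a = a)
    (A : Set (Submodule K K)) : #A ≤ (2 : Cardinal.{u}) ^ #(Idem K) := by
  have : Function.Injective (fun I : A => {e : Idem K | (e : K) ∈ (I : Submodule K K)}) := by
    intro I J h
    exact Subtype.ext (ideal_det_by_idem hv h)
  calc #A ≤ #(Set (Idem K)) := mk_le_of_injective this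
    _ = (2 : Cardinal.{u}) ^ #(Idem K) := mk_set

/-- The linear map `(Fin N → K) →ₗ (Fin (N+1) → K)` extending by `0` in the last slot. -/
def snocZero (N : ℕ) : (Fin N → K) →ₗ[K] (Fin (N + 1) → K) where
  toFun x := Fin.snoc x 0
  map_add' x y := by
    funext i
    refine Fin.lastCases ?_ (fun k => ?_) i
    · simp [Fin.snoc_last]
    · simp [Fin.snoc_castSucc]
  map_smul' c x := by
    funext i
    refine Fin.lastCases ?_ (fun k => ?_) i
    · simp [Fin.snoc_last]
    · simp [Fin.snoc_castSucc]

theorem key_devissage {N : ℕ} {U U' : Submodule K (Fin (N + 1) → K)} (hle : U ≤ U')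
    (h1 : U.comap (snocZero N) = U'.comap (snocZero N))
    (h2 : U.map (LinearMap.proj (R := K) (φ := fun _ : Fin (N+1) => K) (Fin.last N)) =
      U'.map (LinearMap.proj (Fin.last N))) : U = U' := by
  refine le_antisymm hle fun x hx => ?_
  have hπx : x (Fin.last N) ∈ U.map (LinearMap.proj (R := K) (φ := fun _ : Fin (N+1) => K) (Fin.last N)) := by
    rw [h2]
    exact ⟨x, hx, rfl⟩
  obtain ⟨y, hyU, hy⟩ := hπx
  have hxy : x - y ∈ U' := U'.sub_mem hx (hle hyU)
  have hlast : (x - y) (Fin.last N) = 0 := by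
    simp only [Pi.sub_apply]
    simp only [LinearMap.proj_apply] at hy
    rw [hy]
    ring
  have hj : (snocZero N : (Fin N → K) →ₗ[K] (Fin (N+1) → K)) (Fin.init (x - y)) = x - y := by
    show Fin.snoc (Fin.init (x - y)) 0 = x - y
    rw [← hlast]
    exact Fin.snoc_init_self (x - y)
  have : Fin.init (x - y) ∈ U'.comap (snocZero N) := by
    simp only [Submodule.mem_comap, hj]
    exact hxy
  rw [← h1] at this
  have hxyU : x - y ∈ U := by
    simpa only [Submodule.mem_comap, hj] using this
  have := U.add_mem hxyU hyU
  simpa using this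

/-- Chains of submodules of `K^N` over a von Neumann regular ring are bounded. -/
theorem chain_submodule_fin_le (hv : ∀ a : K, ∃ x : K, a * x * a = a) :
    ∀ (N : ℕ) (A : Set (Submodule K (Fin N → K))), IsChain (· ≤ ·) A →
      Cardinal.mk A ≤ ((2 : Cardinal.{u}) ^ #(Idem K)) ^ N := by
  intro N
  induction N with
  | zero =>
    intro A _
    have : Subsingleton (Submodule K (Fin 0 → K)) := by
      constructor
      intro I J
      have : ∀ I : Submodule K (Fin 0 → K), I = ⊥ := by
        intro I
        ext x
        simp only [Submodule.mem_bot]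
        constructor
        · intro _; funext i; exact i.elim0
        · rintro rfl; exact I.zero_mem
      rw [this I, this J]
    have : Subsingleton A := ⟨fun a b => Subtype.ext (Subsingleton.elim _ _)⟩
    simpa using (Cardinal.le_one_iff_subsingleton).2 this
  | succ N ih =>
    intro A hA
    set π : (Fin (N + 1) → K) →ₗ[K] K := LinearMap.proj (Fin.last N) with hπ
    set g : Submodule K (Fin (N + 1) → K) → Submodule K (Fin N → K) × Submodule K K :=
      fun U => (U.comap (snocZero N), U.map π) with hg
    have hinj : Function.Injective (fun U : A => g U) := by
      intro U V h
      simp only [hg, Prod.mk.injEq] at h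
      rcases hA.total U.2 V.2 with hle | hle
      · exact Subtype.ext (key_devissage hle h.1 h.2)
      · exact Subtype.ext (key_devissage hle h.1.symm h.2.symm).symm
    have h1 : IsChain (· ≤ ·) ((fun U : Submodule K (Fin (N+1) → K) => U.comap (snocZero N)) '' A) :=
      hA.image_of_map_rel _ _ _ (fun _ _ h => Submodule.comap_mono h)
    calc #A ≤ #(((fun U : Submodule K (Fin (N+1) → K) => U.comap (snocZero N)) '' A) ×
            ((fun U : Submodule K (Fin (N+1) → K) => U.map π) '' A)) := by
          apply mk_le_of_injective (f := fun U : A =>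
            ((⟨(U : Submodule K (Fin (N+1) → K)).comap (snocZero N), ⟨U, U.2, rfl⟩⟩ :
              ((fun U : Submodule K (Fin (N+1) → K) => U.comap (snocZero N)) '' A)),
             (⟨(U : Submodule K (Fin (N+1) → K)).map π, ⟨U, U.2, rfl⟩⟩ :
              ((fun U : Submodule K (Fin (N+1) → K) => U.map π) '' A))))
          intro U V h
          simp only [Prod.mk.injEq, Subtype.mk.injEq] at h
          exact hinj (by simp only [hg, Prod.mk.injEq]; exact ⟨congrArg Subtype.val h.1, congrArg Subtype.val h.2⟩)
      _ = #((fun U : Submodule K (Fin (N+1) → K) => U.comap (snocZero N)) '' A) *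
            #((fun U : Submodule K (Fin (N+1) → K) => U.map π) '' A) := by
          rw [mk_prod, Cardinal.lift_id, Cardinal.lift_id]
      _ ≤ ((2 : Cardinal.{u}) ^ #(Idem K)) ^ N * ((2 : Cardinal.{u}) ^ #(Idem K)) := by
          apply mul_le_mul' (ih _ h1)
          exact mk_ideal_family_le hv _
      _ = ((2 : Cardinal.{u}) ^ #(Idem K)) ^ (N + 1) := (pow_succ _ _).symm

/-- Transport of the previous bound to an arbitrary finite index type. -/
theorem chain_submodule_fintype_le (hv : ∀ a : K, ∃ x : K, a * x * a = a)
    (ι₂ : Type u) [Fintype ι₂] (A : Set (Submodule K (ι₂ → K))) (hA : IsChain (· ≤ ·) A) :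
    Cardinal.mk A ≤ ((2 : Cardinal.{u}) ^ #(Idem K)) ^ (Fintype.card ι₂) := by
  classical
  let e : ι₂ ≃ Fin (Fintype.card ι₂) := Fintype.equivFin ι₂
  let le : (ι₂ → K) ≃ₗ[K] (Fin (Fintype.card ι₂) → K) := LinearEquiv.funCongrLeft K K e.symm
  let F : Submodule K (ι₂ → K) ≃o Submodule K (Fin (Fintype.card ι₂) → K) :=
    Submodule.orderIsoMapComap le
  have h1 : IsChain (· ≤ ·) ((fun X => F X) '' A) :=
    hA.image_of_map_rel _ _ _ (fun a b h => F.monotone h)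
  have h2 : #((fun X => F X) '' A) = #A := Cardinal.mk_image_eq (fun a b h => F.injective h)
  rw [← h2]
  exact chain_submodule_fin_le hv _ _ h1


/-- The idempotents of a pseudofield inject into `Set G`. -/
theorem mk_idem_le {G K : Type u} [Group G] [CommRing K] [MulSemiringAction G K]
    (hK : IsPseudofield G K) : #(Idem K) ≤ (2 : Cardinal.{u}) ^ #G := by
  have : Nontrivial K := hK.1.1
  obtain ⟨𝔪, hm⟩ := Ideal.exists_maximal K
  have hprime : 𝔪.IsPrime := hm.isPrime
  set N : Ideal K := ⨅ σ : G, 𝔪.comap (MulSemiringAction.toRingHom G K σ) with hN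
  have hmem : ∀ a : K, a ∈ N ↔ ∀ σ : G, σ • a ∈ 𝔪 := by
    intro a
    rw [hN, Submodule.mem_iInf]
    apply forall_congr'
    intro σ
    rfl
  have hstable : IsStableIdeal G N := by
    intro σ a ha
    rw [hmem] at ha ⊢
    intro τ
    rw [smul_smul]
    exact ha (τ * σ)
  have hNbot : N = ⊥ := by
    rcases hK.1.2 N hstable with h | h
    · exact h
    · exfalso
      have h1 : (1 : K) ∈ N := h ▸ Submodule.mem_top
      have h2 := (hmem 1).1 h1 1
      rw [one_smul] at h2
      exact hm.ne_top ((Ideal.eq_top_iff_one _).2 h2)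
  have hinj : Function.Injective (fun e : Idem K => ({σ : G | σ • (e.1 : K) ∈ 𝔪} : Set G)) := by
    intro e f h
    set c : K := e.1 * (1 - f.1) + f.1 * (1 - e.1) with hc
    have hcN : c ∈ N := by
      rw [hmem]
      intro σ
      have hdist : σ • c = (σ • e.1) * (1 - σ • f.1) + (σ • f.1) * (1 - σ • e.1) := by
        rw [hc, smul_add, smul_mul', smul_mul', smul_sub, smul_sub, smul_one]
      rw [hdist]
      by_cases hE : σ • (e.1 : K) ∈ 𝔪
      · have hF : σ • (f.1 : K) ∈ 𝔪 := by
          have := Set.ext_iff.mp h σ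
          exact this.1 hE
        exact Ideal.add_mem _ (Ideal.mul_mem_right _ _ hE) (Ideal.mul_mem_right _ _ hF)
      · have hF : σ • (f.1 : K) ∉ 𝔪 := by
          have := Set.ext_iff.mp h σ
          exact fun hc' => hE (this.2 hc')
        have hEid : (σ • e.1) * (σ • e.1) = σ • e.1 := by rw [← smul_mul', e.2]
        have hFid : (σ • f.1) * (σ • f.1) = σ • f.1 := by rw [← smul_mul', f.2]
        have h1E : (1 : K) - σ • e.1 ∈ 𝔪 := by
          have hz : (σ • e.1) * ((1 : K) - σ • e.1) = 0 := by
            rw [mul_sub, mul_one, hEid, sub_self]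
          rcases hprime.mem_or_mem (hz ▸ 𝔪.zero_mem) with h' | h'
          · exact absurd h' hE
          · exact h'
        have h1F : (1 : K) - σ • f.1 ∈ 𝔪 := by
          have hz : (σ • f.1) * ((1 : K) - σ • f.1) = 0 := by
            rw [mul_sub, mul_one, hFid, sub_self]
          rcases hprime.mem_or_mem (hz ▸ 𝔪.zero_mem) with h' | h'
          · exact absurd h' hF
          · exact h'
        exact Ideal.add_mem _ (Ideal.mul_mem_left _ _ h1F) (Ideal.mul_mem_left _ _ h1E)
    have hc0 : c = 0 := by
      rw [hNbot] at hcN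
      simpa using hcN
    have h1 : e.1 * c = e.1 - e.1 * f.1 := by
      rw [hc]; linear_combination (1 - 2 * f.1) * e.2
    have h2 : f.1 * c = f.1 - e.1 * f.1 := by
      rw [hc]; linear_combination (1 - 2 * e.1) * f.2
    rw [hc0, mul_zero] at h1 h2
    apply Subtype.ext
    have he' : (e.1 : K) = e.1 * f.1 := sub_eq_zero.mp h1.symm
    have hf' : (f.1 : K) = e.1 * f.1 := sub_eq_zero.mp h2.symm
    exact he'.trans hf'.symm
  calc #(Idem K) ≤ #(Set G) := mk_le_of_injective hinj
    _ = (2 : Cardinal.{u}) ^ #G := mk_set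

/-! #### Finite traces of ideals in a polynomial ring -/

variable {V : Type u}

/-- For a finite set `s` of monomials, the linear map sending coefficients to the
corresponding polynomial. -/
noncomputable def L (s : Finset (V →₀ ℕ)) :
    ({m : V →₀ ℕ // m ∈ s} → K) →ₗ[K] MvPolynomial V K where
  toFun v := ∑ m : {m : V →₀ ℕ // m ∈ s}, v m • (MvPolynomial.monomial m.1 (1 : K))
  map_add' v w := by
    simp only [Pi.add_apply, add_smul]
    rw [Finset.sum_add_distrib]
  map_smul' c v := by
    simp only [Pi.smul_apply, smul_eq_mul, RingHom.id_apply]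
    rw [Finset.smul_sum]
    congr 1
    funext m
    rw [smul_smul]

theorem L_self (p : MvPolynomial V K) :
    L (K := K) p.support (fun m => MvPolynomial.coeff m.1 p) = p := by
  show ∑ m : {m : V →₀ ℕ // m ∈ p.support},
      MvPolynomial.coeff m.1 p • MvPolynomial.monomial m.1 (1 : K) = p
  rw [Finset.sum_coe_sort p.support
    (fun m => MvPolynomial.coeff m p • MvPolynomial.monomial m (1 : K))]
  have h : ∀ m ∈ p.support, MvPolynomial.coeff m p • MvPolynomial.monomial m (1 : K)
      = MvPolynomial.monomial m (MvPolynomial.coeff m p) := by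
    intro m _
    rw [MvPolynomial.smul_monomial, smul_eq_mul, mul_one]
  rw [Finset.sum_congr rfl h]
  exact MvPolynomial.support_sum_monomial_coeff p

/-- A convenient helper: `#(Finset X) ≤ max ℵ₀ #X`. -/
theorem mk_finset_le (X : Type u) : #(Finset X) ≤ max ℵ₀ #X := by
  have h : Function.Injective
      (fun s : Finset X => s.map ⟨Sum.inl, Sum.inl_injective⟩ : Finset X → Finset (X ⊕ (ULift.{u} ℕ))) :=
    Finset.map_injective _
  calc #(Finset X) ≤ #(Finset (X ⊕ ULift.{u} ℕ)) := mk_le_of_injective h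
    _ = #(X ⊕ ULift.{u} ℕ) := Cardinal.mk_finset_of_infinite _
    _ = #X + ℵ₀ := by simp [mk_sum, mk_uLift]
    _ ≤ max ℵ₀ #X :=
        Cardinal.add_le_of_le (le_max_left _ _) (le_max_right _ _) (le_max_left _ _)

end Stmt15Aux

/-- For an infinite group `G` and a pseudofield `K`, the poset of radical difference
ideals of `K{y₁,…,yₙ}` is `(|G|·κ)`-noetherian, where `κ` is the number of
ultrafilters on `G`. -/
theorem stmt15 {G K : Type u} [Group G] [Infinite G] [CommRing K] [MulSemiringAction G K]
    (hK : IsPseudofield G K) (n : ℕ) :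
    IsKNoetherian { I : Ideal (MvPolynomial (G × Fin n) K) // IsDiffIdeal I ∧ I.IsRadical }
      (Cardinal.mk G * Cardinal.mk (Ultrafilter G)) := by
  classical
  intro ι _ f hf
  set B : Cardinal.{u} := (2 : Cardinal.{u}) ^ #(Stmt15Aux.Idem K) with hB
  set μ : Cardinal.{u} := B ^ (ℵ₀ : Cardinal.{u}) with hμ
  -- the traces of the ideals on finite coordinate subspaces
  set T : ι → ∀ s : Finset ((G × Fin n) →₀ ℕ), Submodule K ({m : (G × Fin n) →₀ ℕ // m ∈ s} → K) :=
    fun i s => Submodule.comap (Stmt15Aux.L s)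
      (Submodule.restrictScalars K ((f i).1 : Ideal (MvPolynomial (G × Fin n) K))) with hT
  have hmono : ∀ s : Finset ((G × Fin n) →₀ ℕ), Monotone (fun i => T i s) := by
    intro s i j hij
    apply Submodule.comap_mono
    intro x hx
    rw [Submodule.restrictScalars_mem] at hx ⊢
    exact (hf.monotone hij : f i ≤ f j) hx
  have hdet : ∀ i j : ι, i < j → ∃ s : Finset ((G × Fin n) →₀ ℕ), T i s ≠ T j s := by
    intro i j hij
    have hlt : ((f i).1 : Ideal (MvPolynomial (G × Fin n) K)) < (f j).1 := hf hij
    obtain ⟨hle, p, hpj, hpi⟩ := (SetLike.lt_iff_le_and_exists).1 hlt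
    refine ⟨p.support, fun hc => hpi ?_⟩
    have hv : (fun m : {m : (G × Fin n) →₀ ℕ // m ∈ p.support} => MvPolynomial.coeff m.1 p)
        ∈ T j p.support := by
      rw [hT]
      rw [Submodule.mem_comap, Submodule.restrictScalars_mem, Stmt15Aux.L_self]
      exact hpj
    rw [← hc, hT] at hv
    rwa [Submodule.mem_comap, Submodule.restrictScalars_mem, Stmt15Aux.L_self] at hv
  -- the global injection into the product of the trace chains
  have hcount : #ι ≤ Cardinal.prod
      (fun s : Finset ((G × Fin n) →₀ ℕ) => #(Set.range (fun i => T i s))) := by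
    rw [← Cardinal.mk_pi]
    apply Cardinal.mk_le_of_injective
      (f := fun i (s : Finset ((G × Fin n) →₀ ℕ)) =>
        (⟨T i s, ⟨i, rfl⟩⟩ : Set.range (fun i' => T i' s)))
    intro i j hij
    by_contra hne
    rcases lt_or_gt_of_ne hne with h | h
    · obtain ⟨s, hs⟩ := hdet _ _ h
      exact hs (congrArg Subtype.val (congrFun hij s))
    · obtain ⟨s, hs⟩ := hdet _ _ h
      exact hs (congrArg Subtype.val (congrFun hij s)).symm
  -- each trace chain is small
  have hper : ∀ s : Finset ((G × Fin n) →₀ ℕ), #(Set.range (fun i => T i s)) ≤ μ := by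
    intro s
    have hchain : IsChain (· ≤ ·) (Set.range (fun i => T i s)) := by
      rintro _ ⟨i, rfl⟩ _ ⟨j, rfl⟩ _
      rcases le_total i j with h | h
      · exact Or.inl (hmono s h)
      · exact Or.inr (hmono s h)
    calc #(Set.range (fun i => T i s))
        ≤ B ^ (Fintype.card {m : (G × Fin n) →₀ ℕ // m ∈ s}) :=
          Stmt15Aux.chain_submodule_fintype_le hK.2 _ _ hchain
      _ = B ^ ((Fintype.card {m : (G × Fin n) →₀ ℕ // m ∈ s} : ℕ) : Cardinal.{u}) :=
          (Cardinal.power_natCast _ _).symm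
      _ ≤ μ := by
          rw [hμ]
          apply Cardinal.power_le_power_left (Cardinal.power_ne_zero _ two_ne_zero)
          exact (Cardinal.nat_lt_aleph0 _).le
  have h1 : #ι ≤ μ ^ #(Finset ((G × Fin n) →₀ ℕ)) := by
    refine hcount.trans ?_
    calc Cardinal.prod (fun s : Finset ((G × Fin n) →₀ ℕ) => #(Set.range fun i => T i s))
        ≤ Cardinal.prod (fun _ : Finset ((G × Fin n) →₀ ℕ) => μ) :=
          Cardinal.prod_le_prod _ _ hper
      _ = μ ^ #(Finset ((G × Fin n) →₀ ℕ)) := Cardinal.prod_const' _ _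
  -- cardinal bookkeeping
  have hGG : #(G × G) = #G := by
    rw [Cardinal.mk_prod]
    simp only [Cardinal.lift_id]
    exact Cardinal.mul_eq_self (Cardinal.aleph0_le_mk G)
  have hembed : #(((G × Fin n) × ℕ) : Type u) ≤ #G := by
    have hinj : Function.Injective (fun p : (G × Fin n) × ℕ =>
        ((p.1.1, (Infinite.natEmbedding G) (Nat.pairEquiv (p.1.2.val, p.2))) : G × G)) := by
      intro p q h
      obtain ⟨⟨g, k⟩, m⟩ := p
      obtain ⟨⟨g', k'⟩, m'⟩ := q
      simp only [Prod.mk.injEq] at h ⊢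
      obtain ⟨hg, hrest⟩ := h
      have h4 := Nat.pairEquiv.injective ((Infinite.natEmbedding G).injective hrest)
      simp only [Prod.mk.injEq] at h4
      exact ⟨⟨hg, Fin.ext h4.1⟩, h4.2⟩
    calc #(((G × Fin n) × ℕ) : Type u) ≤ #(G × G) := Cardinal.mk_le_of_injective hinj
      _ = #G := hGG
  have hD1 : #((G × Fin n) →₀ ℕ) ≤ #G := by
    calc #((G × Fin n) →₀ ℕ) ≤ #(Finset (((G × Fin n) × ℕ) : Type u)) :=
          Cardinal.mk_le_of_injective (Finsupp.graph_injective _ _)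
      _ ≤ max ℵ₀ #(((G × Fin n) × ℕ) : Type u) := Stmt15Aux.mk_finset_le _
      _ ≤ max ℵ₀ #G := max_le_max le_rfl hembed
      _ = #G := max_eq_right (Cardinal.aleph0_le_mk G)
  have hD2 : #(Finset ((G × Fin n) →₀ ℕ)) ≤ #G := by
    calc #(Finset ((G × Fin n) →₀ ℕ)) ≤ max ℵ₀ #((G × Fin n) →₀ ℕ) := Stmt15Aux.mk_finset_le _
      _ ≤ max ℵ₀ #G := max_le_max le_rfl hD1
      _ = #G := max_eq_right (Cardinal.aleph0_le_mk G)
  have hIdem : #(Stmt15Aux.Idem K) ≤ (2 : Cardinal.{u}) ^ #G := Stmt15Aux.mk_idem_le hK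
  have haleph : (ℵ₀ : Cardinal.{u}) ≤ (2 : Cardinal.{u}) ^ #G :=
    (Cardinal.aleph0_le_mk G).trans (Cardinal.cantor (#G)).le
  have hGle : #G ≤ (2 : Cardinal.{u}) ^ #G := (Cardinal.cantor (#G)).le
  have h2 : μ ^ #(Finset ((G × Fin n) →₀ ℕ)) ≤
      (2 : Cardinal.{u}) ^ ((2 : Cardinal.{u}) ^ #G) := by
    rw [hμ, hB, ← Cardinal.power_mul, ← Cardinal.power_mul]
    apply Cardinal.power_le_power_left two_ne_zero
    refine le_trans (b := ((2 : Cardinal.{u}) ^ #G) * (((2 : Cardinal.{u}) ^ #G) *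
        ((2 : Cardinal.{u}) ^ #G))) ?_ ?_
    · exact mul_le_mul' hIdem (mul_le_mul' haleph (hD2.trans hGle))
    · rw [Cardinal.mul_eq_self haleph, Cardinal.mul_eq_self haleph]
  have hfinal : (2 : Cardinal.{u}) ^ ((2 : Cardinal.{u}) ^ #G) ≤ #G * #(Ultrafilter G) := by
    calc (2 : Cardinal.{u}) ^ ((2 : Cardinal.{u}) ^ #G) ≤ #(Ultrafilter G) :=
          Stmt15Aux.pospisil G
      _ = 1 * #(Ultrafilter G) := (one_mul _).symm
      _ ≤ #G * #(Ultrafilter G) :=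
          mul_le_mul' (Cardinal.one_le_iff_ne_zero.2 (Cardinal.mk_ne_zero G)) le_rfl
  exact h1.trans (h2.trans hfinal)
end
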